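/- arXiv:2210.16664 — 5 statements merged into one kernel-verified Lean document; each statement's English description precedes it below -/
import Mathlib

section
/- Let ‖·‖ be a norm on ℝⁿ with conjugate norm ‖·‖_*, let V ⊆ ℝⁿ be a nonempty open convex set, α ≥ 0, and let f : V → ℝ be a continuously differentiable convex function. Then the following are equivalent: (1) ⟨h, ∇f(x+h) − ∇f(x)⟩ ≤ α‖h‖² for all x, x+h ∈ V; (2) ‖∇f(x+h) − ∇f(x)‖_* ≤ α‖h‖ for all x, x+h ∈ V; (3) f(x+h) ≤ f(x) + ⟨h, ∇f(x)⟩ + (α/2)‖h‖² for all x, x+h ∈ V. -/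
open scoped RealInnerProductSpace
open Real Matrix

/-- `N` is a norm on the real vector space `E`. -/
def IsNorm {E : Type*} [AddCommGroup E] [Module ℝ E] (N : E → ℝ) : Prop :=
  (∀ x, 0 ≤ N x) ∧ (∀ x, N x = 0 ↔ x = 0) ∧
    (∀ (c : ℝ) (x), N (c • x) = |c| * N x) ∧ ∀ x y, N (x + y) ≤ N x + N y

/-- The conjugate (dual) norm of `N`: `‖y‖_* = sup {⟨y,x⟩ : N x ≤ 1}`. -/
noncomputable def dualNorm {E : Type*} [NormedAddCommGroup E] [InnerProductSpace ℝ E]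
    (N : E → ℝ) (y : E) : ℝ :=
  sSup {r | ∃ x, N x ≤ 1 ∧ r = ⟪y, x⟫}

/-- `N` is a `κ`-smooth norm: its square `Φ` is `C¹` and satisfies
`Φ(x+h) ≤ Φ(x) + ⟨∇Φ(x),h⟩ + κ Φ(h)`. -/
def IsSmoothNorm {E : Type*} [NormedAddCommGroup E] [InnerProductSpace ℝ E] [CompleteSpace E]
    (κ : ℝ) (N : E → ℝ) : Prop :=
  IsNorm N ∧ ContDiff ℝ 1 (fun x => N x ^ 2) ∧
    ∀ x h, N (x + h) ^ 2 ≤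
      N x ^ 2 + ⟪gradient (fun z => N z ^ 2) x, h⟫ + κ * N h ^ 2

/-- `N` is a `(κ,ς)`-regular norm: within factor `ς` of a `κ`-smooth norm. -/
def IsRegularNorm {E : Type*} [NormedAddCommGroup E] [InnerProductSpace ℝ E] [CompleteSpace E]
    (κ ς : ℝ) (N : E → ℝ) : Prop :=
  ∃ M : E → ℝ, IsSmoothNorm κ M ∧ ∀ x, ς⁻¹ * M x ≤ N x ∧ N x ≤ ς * M x

section Aux

open Set

variable {n : ℕ}

lemma IsNorm.zero' {E : Type*} [AddCommGroup E] [Module ℝ E] {N : E → ℝ} (hN : IsNorm N) :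
    N 0 = 0 := (hN.2.1 0).mpr rfl

lemma coord_abs_le_norm (x : EuclideanSpace ℝ (Fin n)) (i : Fin n) : |x i| ≤ ‖x‖ := by
  have h := abs_real_inner_le_norm x (EuclideanSpace.single i (1:ℝ))
  simp only [EuclideanSpace.inner_single_right, EuclideanSpace.norm_single, norm_one,
    mul_one, one_mul] at h
  exact h

lemma isnorm_upper {N : EuclideanSpace ℝ (Fin n) → ℝ} (hN : IsNorm N) :
    ∃ C : ℝ, 0 < C ∧ ∀ x, N x ≤ C * ‖x‖ := by
  classical
  refine ⟨(∑ i : Fin n, N (EuclideanSpace.single i 1)) + 1, ?_, ?_⟩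
  · have : 0 ≤ ∑ i : Fin n, N (EuclideanSpace.single i 1) :=
      Finset.sum_nonneg fun i _ => hN.1 _
    linarith
  · intro x
    have hx : x = ∑ i : Fin n, (x i) • EuclideanSpace.single i (1:ℝ) := by
      ext j
      rw [WithLp.ofLp_sum, Finset.sum_apply]
      simp [EuclideanSpace.single_apply]
    calc N x = N (∑ i : Fin n, (x i) • EuclideanSpace.single i (1:ℝ)) := by rw [← hx]
      _ ≤ ∑ i : Fin n, N ((x i) • EuclideanSpace.single i (1:ℝ)) :=
          Finset.le_sum_of_subadditive N hN.zero'.le hN.2.2.2 _ _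
      _ = ∑ i : Fin n, |x i| * N (EuclideanSpace.single i (1:ℝ)) := by
          simp [hN.2.2.1]
      _ ≤ ∑ i : Fin n, ‖x‖ * N (EuclideanSpace.single i (1:ℝ)) :=
          Finset.sum_le_sum fun i _ =>
            mul_le_mul_of_nonneg_right (coord_abs_le_norm x i) (hN.1 _)
      _ = (∑ i : Fin n, N (EuclideanSpace.single i 1)) * ‖x‖ := by
          rw [← Finset.mul_sum, mul_comm]
      _ ≤ _ := by nlinarith [norm_nonneg x]

lemma isnorm_continuous {N : EuclideanSpace ℝ (Fin n) → ℝ} (hN : IsNorm N) :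
    Continuous N := by
  obtain ⟨C, hC, hCle⟩ := isnorm_upper hN
  have key : ∀ x y : EuclideanSpace ℝ (Fin n), N x - N y ≤ C * ‖x - y‖ := by
    intro x y
    have h1 : N x ≤ N (x - y) + N y := by
      have := hN.2.2.2 (x - y) y
      simpa using this
    have := hCle (x - y)
    linarith
  rw [Metric.continuous_iff]
  intro x ε hε
  refine ⟨ε / C, by positivity, fun y hy => ?_⟩
  rw [Real.dist_eq]
  have h1 := key y x
  have h2 := key x y
  have h3 : ‖y - x‖ < ε / C := by rwa [dist_eq_norm] at hy
  have h4 : ‖x - y‖ = ‖y - x‖ := norm_sub_rev _ _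
  have : C * ‖y - x‖ < ε := by
    rw [← lt_div_iff₀' hC]; linarith
  rw [abs_lt]; constructor <;> nlinarith

lemma isnorm_lower {N : EuclideanSpace ℝ (Fin n) → ℝ} (hN : IsNorm N) :
    ∃ c : ℝ, 0 < c ∧ ∀ x, c * ‖x‖ ≤ N x := by
  by_cases hne : (Metric.sphere (0 : EuclideanSpace ℝ (Fin n)) 1).Nonempty
  · obtain ⟨z, hz, hmin⟩ := (isCompact_sphere (0 : EuclideanSpace ℝ (Fin n)) 1).exists_isMinOn
      hne (isnorm_continuous hN).continuousOn
    have hz1 : ‖z‖ = 1 := by simpa using hz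
    have hzne : z ≠ 0 := by intro h; rw [h] at hz1; simp at hz1
    have hcz : 0 < N z := by
      rcases lt_or_eq_of_le (hN.1 z) with h | h
      · exact h
      · exact absurd ((hN.2.1 z).mp h.symm) hzne
    refine ⟨N z, hcz, fun x => ?_⟩
    rcases eq_or_ne x 0 with rfl | hx
    · simp [hN.zero']
    · have hxpos : 0 < ‖x‖ := norm_pos_iff.mpr hx
      have hmem : ‖x‖⁻¹ • x ∈ Metric.sphere (0 : EuclideanSpace ℝ (Fin n)) 1 := by
        simp [norm_smul, abs_of_pos (inv_pos.mpr hxpos), inv_mul_cancel₀ hxpos.ne']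
      have := hmin hmem
      simp only [Set.mem_setOf_eq] at this
      have heq : N (‖x‖⁻¹ • x) = ‖x‖⁻¹ * N x := by
        rw [hN.2.2.1, abs_of_pos (inv_pos.mpr hxpos)]
      rw [heq] at this
      calc N z * ‖x‖ ≤ (‖x‖⁻¹ * N x) * ‖x‖ := by
            exact mul_le_mul_of_nonneg_right this hxpos.le
        _ = N x := by field_simp
  · refine ⟨1, one_pos, fun x => ?_⟩
    rcases eq_or_ne x 0 with rfl | hx
    · simp [hN.zero']
    · exact absurd ⟨‖x‖⁻¹ • x, by simp [norm_smul, abs_of_pos (inv_pos.mpr (norm_pos_iff.mpr hx)),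
        inv_mul_cancel₀ (norm_pos_iff.mpr hx).ne']⟩ hne

lemma dualNorm_bddAbove {N : EuclideanSpace ℝ (Fin n) → ℝ} (hN : IsNorm N)
    (y : EuclideanSpace ℝ (Fin n)) :
    BddAbove {r | ∃ x, N x ≤ 1 ∧ r = ⟪y, x⟫} := by
  obtain ⟨c, hc, hcle⟩ := isnorm_lower hN
  refine ⟨‖y‖ * c⁻¹, ?_⟩
  rintro r ⟨x, hx, rfl⟩
  have h1 : ‖x‖ ≤ c⁻¹ := by
    rw [← one_div, le_div_iff₀ hc]
    linarith [hcle x]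
  calc ⟪y, x⟫ ≤ ‖y‖ * ‖x‖ := real_inner_le_norm y x
    _ ≤ ‖y‖ * c⁻¹ := mul_le_mul_of_nonneg_left h1 (norm_nonneg y)

lemma dualNorm_le {N : EuclideanSpace ℝ (Fin n) → ℝ}
    {y : EuclideanSpace ℝ (Fin n)} {r : ℝ}
    (h : ∀ u, N u ≤ 1 → ⟪y, u⟫ ≤ r) (hr : 0 ≤ r) : dualNorm N y ≤ r := by
  apply Real.sSup_le _ hr
  rintro s ⟨u, hu, rfl⟩
  exact h u hu

lemma inner_le_dualNorm {N : EuclideanSpace ℝ (Fin n) → ℝ} (hN : IsNorm N)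
    (y h : EuclideanSpace ℝ (Fin n)) : ⟪h, y⟫ ≤ N h * dualNorm N y := by
  rcases eq_or_lt_of_le (hN.1 h) with h0 | hpos
  · have : h = 0 := (hN.2.1 h).mp h0.symm
    simp [this, hN.zero']
  · have hmem : ⟪y, (N h)⁻¹ • h⟫ ∈ {r | ∃ x, N x ≤ 1 ∧ r = ⟪y, x⟫} := by
      refine ⟨(N h)⁻¹ • h, ?_, rfl⟩
      rw [hN.2.2.1, abs_of_pos (inv_pos.mpr hpos), inv_mul_cancel₀ hpos.ne']
    have hle : ⟪y, (N h)⁻¹ • h⟫ ≤ dualNorm N y := le_csSup (dualNorm_bddAbove hN y) hmem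
    have heq : ⟪y, (N h)⁻¹ • h⟫ = (N h)⁻¹ * ⟪y, h⟫ := real_inner_smul_right y h _
    rw [heq] at hle
    have := mul_le_mul_of_nonneg_left hle (hN.1 h)
    rw [← mul_assoc, mul_inv_cancel₀ hpos.ne', one_mul] at this
    rwa [real_inner_comm]

lemma grad_lower {V : Set (EuclideanSpace ℝ (Fin n))}
    {f : EuclideanSpace ℝ (Fin n) → ℝ} {f' : EuclideanSpace ℝ (Fin n) → EuclideanSpace ℝ (Fin n)}
    (hf : ∀ x ∈ V, HasGradientAt f (f' x) x) (hconv : ConvexOn ℝ V f)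
    {a z : EuclideanSpace ℝ (Fin n)} (ha : a ∈ V) (hz : z ∈ V) :
    f a + ⟪f' a, z - a⟫ ≤ f z := by
  set γ : ℝ →ᵃ[ℝ] EuclideanSpace ℝ (Fin n) := AffineMap.lineMap a z with hγ
  have hγ0 : γ 0 = a := AffineMap.lineMap_apply_zero a z
  have hγ1 : γ 1 = z := AffineMap.lineMap_apply_one a z
  have hconv' : ConvexOn ℝ (γ ⁻¹' V) (f ∘ γ) := hconv.comp_affineMap γ
  have h0 : (0:ℝ) ∈ γ ⁻¹' V := by simp [Set.mem_preimage, hγ0, ha]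
  have h1 : (1:ℝ) ∈ γ ⁻¹' V := by simp [Set.mem_preimage, hγ1, hz]
  have hdγ : HasDerivAt (fun t : ℝ => γ t) (z - a) 0 := by
    have : (fun t : ℝ => γ t) = fun t : ℝ => t • (z - a) + a := by
      funext t
      rw [hγ, AffineMap.lineMap_apply_module]
      module
    rw [this]
    simpa using ((hasDerivAt_id (0:ℝ)).smul_const (z - a)).add_const a
  have hF : HasFDerivAt f ((InnerProductSpace.toDual ℝ _) (f' a)) a :=
    hasGradientAt_iff_hasFDerivAt.mp (hf a ha)
  have hψ : HasDerivAt (f ∘ γ) ⟪f' a, z - a⟫ 0 := by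
    have hF' : HasFDerivAt f ((InnerProductSpace.toDual ℝ _) (f' a)) (γ 0) := by
      rw [hγ0]; exact hF
    simpa [InnerProductSpace.toDual_apply_apply, hγ0] using hF'.comp_hasDerivAt 0 hdγ
  have key := hconv'.le_slope_of_hasDerivAt h0 h1 zero_lt_one hψ
  rw [slope_def_field] at key
  simp only [Function.comp_apply, hγ0, hγ1] at key
  have : ⟪f' a, z - a⟫ ≤ f z - f a := by
    calc ⟪f' a, z - a⟫ ≤ (f z - f a) / (1 - 0) := key
      _ = f z - f a := by norm_num
  linarith

lemma step32 {V : Set (EuclideanSpace ℝ (Fin n))} {α : ℝ} (hα : 0 ≤ α)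
    {N : EuclideanSpace ℝ (Fin n) → ℝ} (hN : IsNorm N)
    {f : EuclideanSpace ℝ (Fin n) → ℝ} {f' : EuclideanSpace ℝ (Fin n) → EuclideanSpace ℝ (Fin n)}
    (hf : ∀ x ∈ V, HasGradientAt f (f' x) x) (hconv : ConvexOn ℝ V f)
    (hp3 : ∀ x h, x ∈ V → x + h ∈ V →
      f (x + h) ≤ f x + ⟪h, f' x⟫ + α / 2 * N h ^ 2)
    {a e u : EuclideanSpace ℝ (Fin n)} (ha : a ∈ V) (hb : a + e ∈ V) (hu : N u ≤ 1)
    (hz : a + e - N e • u ∈ V) :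
    ⟪u, f' (a + e)⟫ - ⟪u, f' a⟫ ≤ α * N e := by
  rcases eq_or_lt_of_le (hN.1 e) with h0 | hNe
  · have he : e = 0 := (hN.2.1 e).mp h0.symm
    simp [he, hN.zero']
  · have h1 := hp3 a e ha hb
    have hmem2 : a + e + -(N e • u) ∈ V := by
      rw [← sub_eq_add_neg]; exact hz
    have h2 := hp3 (a + e) (-(N e • u)) hb hmem2
    have hNneg : N (-(N e • u)) = N e * N u := by
      have h3 : -(N e • u) = (-(N e)) • u := by module
      rw [h3, hN.2.2.1, abs_neg, abs_of_pos hNe]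
    have h3 := grad_lower hf hconv ha hz
    have hsub : a + e - N e • u - a = e - N e • u := by abel
    rw [hsub] at h3
    rw [inner_sub_right, real_inner_smul_right] at h3
    rw [inner_neg_left, real_inner_smul_left] at h2
    rw [hNneg] at h2
    rw [← sub_eq_add_neg] at h2
    have hcomm1 : ⟪e, f' a⟫ = ⟪f' a, e⟫ := real_inner_comm _ _
    have hcomm2 : ⟪f' a, u⟫ = ⟪u, f' a⟫ := real_inner_comm _ _
    have hNu2 : N u ^ 2 ≤ 1 := by nlinarith [hN.1 u]
    have hsq : (N e * N u) ^ 2 ≤ N e ^ 2 := by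
      have h5 := mul_le_mul_of_nonneg_left hNu2 (sq_nonneg (N e))
      calc (N e * N u) ^ 2 = N e ^ 2 * N u ^ 2 := by ring
        _ ≤ N e ^ 2 * 1 := h5
        _ = N e ^ 2 := mul_one _
    have hkey : N e * (⟪u, f' (a + e)⟫ - ⟪u, f' a⟫) ≤ α * N e ^ 2 := by
      nlinarith [h1, h2, h3]
    have := mul_le_mul_of_nonneg_left hkey (le_of_lt (inv_pos.mpr hNe))
    rw [← mul_assoc, inv_mul_cancel₀ hNe.ne', one_mul] at this
    calc ⟪u, f' (a + e)⟫ - ⟪u, f' a⟫ ≤ (N e)⁻¹ * (α * N e ^ 2) := this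
      _ = α * N e := by field_simp

lemma mem_of_seg {V : Set (EuclideanSpace ℝ (Fin n))} (hVc : Convex ℝ V)
    {x h : EuclideanSpace ℝ (Fin n)} (hx : x ∈ V) (hxh : x + h ∈ V) {t : ℝ}
    (ht0 : 0 ≤ t) (ht1 : t ≤ 1) : x + t • h ∈ V := by
  have hmem := hVc hx hxh (by linarith : (0:ℝ) ≤ 1 - t) ht0 (by ring)
  convert hmem using 1
  module

lemma mem_seg {x h : EuclideanSpace ℝ (Fin n)} {t : ℝ} (ht0 : 0 ≤ t) (ht1 : t ≤ 1) :
    x + t • h ∈ segment ℝ x (x + h) := by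
  rw [segment_eq_image']
  exact ⟨t, ⟨ht0, ht1⟩, by simp⟩

lemma imp32 {V : Set (EuclideanSpace ℝ (Fin n))} (hVo : IsOpen V) (hVc : Convex ℝ V)
    {α : ℝ} (hα : 0 ≤ α) {N : EuclideanSpace ℝ (Fin n) → ℝ} (hN : IsNorm N)
    {f : EuclideanSpace ℝ (Fin n) → ℝ} {f' : EuclideanSpace ℝ (Fin n) → EuclideanSpace ℝ (Fin n)}
    (hf : ∀ x ∈ V, HasGradientAt f (f' x) x) (hconv : ConvexOn ℝ V f)
    (hp3 : ∀ x h, x ∈ V → x + h ∈ V →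
      f (x + h) ≤ f x + ⟪h, f' x⟫ + α / 2 * N h ^ 2) :
    ∀ x h, x ∈ V → x + h ∈ V → dualNorm N (f' (x + h) - f' x) ≤ α * N h := by
  intro x h hx hxh
  apply dualNorm_le _ (mul_nonneg hα (hN.1 h))
  intro u hu
  set S := segment ℝ x (x + h) with hS
  have hScomp : IsCompact S := by
    rw [hS, segment_eq_image']
    exact isCompact_Icc.image (by fun_prop)
  have hSV : S ⊆ V := hVc.segment_subset hx hxh
  obtain ⟨δ, hδpos, hδ⟩ := hScomp.exists_thickening_subset_open hVo hSV
  obtain ⟨k0, hk0⟩ := exists_nat_gt (N h * ‖u‖ / δ)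
  set K := k0 + 1 with hK
  have hKpos : (0:ℝ) < (K:ℕ) := by positivity
  have hdist : N h * ‖u‖ / K < δ := by
    rw [div_lt_iff₀ hKpos]
    rw [div_lt_iff₀ hδpos] at hk0
    have : (k0:ℝ) ≤ (K:ℕ) := by exact_mod_cast Nat.le_succ k0
    nlinarith [hδpos]
  set G : ℕ → ℝ := fun i => ⟪u, f' (x + ((i:ℝ)/(K:ℕ)) • h)⟫ with hG
  have hmem : ∀ i : ℕ, i ≤ K → x + ((i:ℝ)/(K:ℕ)) • h ∈ V := by
    intro i hi
    refine mem_of_seg hVc hx hxh (by positivity) ?_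
    rw [div_le_one hKpos]
    exact_mod_cast hi
  have hseg : ∀ i : ℕ, i ≤ K → x + ((i:ℝ)/(K:ℕ)) • h ∈ S := by
    intro i hi
    refine mem_seg (by positivity) ?_
    rw [div_le_one hKpos]
    exact_mod_cast hi
  have hNe : N (((K:ℕ):ℝ)⁻¹ • h) = N h / K := by
    rw [hN.2.2.1, abs_of_pos (inv_pos.mpr hKpos)]
    ring
  have hstep : ∀ i : ℕ, i < K → G (i+1) - G i ≤ α * (N h / K) := by
    intro i hi
    have hae : x + ((i:ℝ)/(K:ℕ)) • h + ((K:ℕ):ℝ)⁻¹ • h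
        = x + ((((i+1):ℕ):ℝ)/(K:ℕ)) • h := by
      have h6 : (((i+1):ℕ):ℝ)/((K:ℕ):ℝ) = (i:ℝ)/((K:ℕ):ℝ) + ((K:ℕ):ℝ)⁻¹ := by
        push_cast
        rw [add_div, one_div]
      rw [h6, add_smul]
      abel
    have ha' : x + ((i:ℝ)/(K:ℕ)) • h ∈ V := hmem i hi.le
    have hb' : x + ((i:ℝ)/(K:ℕ)) • h + ((K:ℕ):ℝ)⁻¹ • h ∈ V := by
      rw [hae]; exact hmem (i+1) hi
    have hz' : x + ((i:ℝ)/(K:ℕ)) • h + ((K:ℕ):ℝ)⁻¹ • h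
        - N (((K:ℕ):ℝ)⁻¹ • h) • u ∈ V := by
      apply hδ
      rw [Metric.mem_thickening_iff]
      refine ⟨x + ((i:ℝ)/(K:ℕ)) • h + ((K:ℕ):ℝ)⁻¹ • h, by rw [hae]; exact hseg (i+1) hi, ?_⟩
      rw [dist_eq_norm]
      have : x + ((i:ℝ)/(K:ℕ)) • h + ((K:ℕ):ℝ)⁻¹ • h - N (((K:ℕ):ℝ)⁻¹ • h) • u
          - (x + ((i:ℝ)/(K:ℕ)) • h + ((K:ℕ):ℝ)⁻¹ • h) = -(N (((K:ℕ):ℝ)⁻¹ • h) • u) := by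
        abel
      rw [this, norm_neg, norm_smul, hNe, Real.norm_eq_abs]
      rw [abs_of_nonneg (div_nonneg (hN.1 h) hKpos.le)]
      calc N h / (K:ℕ) * ‖u‖ = N h * ‖u‖ / (K:ℕ) := by ring
        _ < δ := hdist
    have := step32 hα hN hf hconv hp3 ha' hb' hu hz'
    rw [hae, hNe] at this
    simpa only [hG] using this
  have htel : ∑ i ∈ Finset.range K, (G (i+1) - G i) = G K - G 0 := Finset.sum_range_sub G K
  have hsum : G K - G 0 ≤ α * N h := by
    rw [← htel]
    calc ∑ i ∈ Finset.range K, (G (i+1) - G i) ≤ ∑ i ∈ Finset.range K, α * (N h / K) :=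
          Finset.sum_le_sum fun i hi => hstep i (Finset.mem_range.mp hi)
      _ = K * (α * (N h / K)) := by rw [Finset.sum_const, Finset.card_range]; simp
      _ = α * N h := by field_simp
  have hGK : G K = ⟪u, f' (x + h)⟫ := by
    rw [hG]
    simp only [div_self hKpos.ne', one_smul]
  have hG0 : G 0 = ⟪u, f' x⟫ := by
    rw [hG]
    norm_num
  rw [real_inner_comm, inner_sub_right]
  rw [hGK, hG0] at hsum
  linarith

lemma imp13 {V : Set (EuclideanSpace ℝ (Fin n))} (hVc : Convex ℝ V)
    {α : ℝ} (hα : 0 ≤ α) {N : EuclideanSpace ℝ (Fin n) → ℝ} (hN : IsNorm N)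
    {f : EuclideanSpace ℝ (Fin n) → ℝ} {f' : EuclideanSpace ℝ (Fin n) → EuclideanSpace ℝ (Fin n)}
    (hf : ∀ x ∈ V, HasGradientAt f (f' x) x) (hf'c : ContinuousOn f' V)
    (hp1 : ∀ x h, x ∈ V → x + h ∈ V → ⟪h, f' (x + h) - f' x⟫ ≤ α * N h ^ 2) :
    ∀ x h, x ∈ V → x + h ∈ V → f (x + h) ≤ f x + ⟪h, f' x⟫ + α / 2 * N h ^ 2 := by
  intro x h hx hxh
  have hseg : ∀ t : ℝ, t ∈ Icc (0:ℝ) 1 → x + t • h ∈ V := fun t ht =>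
    mem_of_seg hVc hx hxh ht.1 ht.2
  set D : ℝ → ℝ := fun t => ⟪f' (x + t • h), h⟫ with hD
  have hderiv : ∀ t ∈ uIcc (0:ℝ) 1, HasDerivAt (fun s => f (x + s • h)) (D t) t := by
    intro t ht
    rw [uIcc_of_le zero_le_one] at ht
    have hmem := hseg t ht
    have hd : HasDerivAt (fun s : ℝ => x + s • h) h t := by
      have : (fun s : ℝ => x + s • h) = fun s : ℝ => s • h + x := by funext s; abel
      rw [this]
      simpa using ((hasDerivAt_id t).smul_const h).add_const x
    have hF := hasGradientAt_iff_hasFDerivAt.mp (hf _ hmem)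
    have h2 := hF.comp_hasDerivAt t hd
    simp only [InnerProductSpace.toDual_apply_apply] at h2
    exact h2
  have hγmaps : Set.MapsTo (fun t : ℝ => x + t • h) (Icc (0:ℝ) 1) V := fun t ht => hseg t ht
  have hDc : ContinuousOn D (uIcc (0:ℝ) 1) := by
    rw [uIcc_of_le zero_le_one]
    have hcomp : ContinuousOn (fun t : ℝ => f' (x + t • h)) (Icc (0:ℝ) 1) :=
      hf'c.comp (by fun_prop) hγmaps
    exact hcomp.inner continuousOn_const
  have hint : IntervalIntegrable D MeasureTheory.volume 0 1 := hDc.intervalIntegrable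
  have hFTC := intervalIntegral.integral_eq_sub_of_hasDerivAt hderiv hint
  simp only [one_smul, zero_smul, add_zero] at hFTC
  have hbound : ∀ t ∈ Icc (0:ℝ) 1, D t ≤ ⟪h, f' x⟫ + α * N h ^ 2 * t := by
    intro t ht
    have hsplit : D t = ⟪h, f' x⟫ + ⟪h, f' (x + t • h) - f' x⟫ := by
      rw [hD]
      simp only [inner_sub_right]
      rw [real_inner_comm]
      ring
    rcases eq_or_lt_of_le ht.1 with h0 | htpos
    · rw [hsplit, ← h0]
      simp
    · have hkey := hp1 x (t • h) hx (hseg t ht)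
      rw [real_inner_smul_left, hN.2.2.1, abs_of_pos htpos] at hkey
      have : ⟪h, f' (x + t • h) - f' x⟫ ≤ α * N h ^ 2 * t := by
        have hexp : α * (t * N h) ^ 2 = (α * N h ^ 2 * t) * t := by ring
        rw [hexp] at hkey
        exact le_of_mul_le_mul_right (by linarith [hkey]) htpos
      rw [hsplit]
      linarith
  have hRint : IntervalIntegrable (fun t : ℝ => ⟪h, f' x⟫ + α * N h ^ 2 * t)
      MeasureTheory.volume 0 1 := by
    apply Continuous.intervalIntegrable
    fun_prop
  have hmono := intervalIntegral.integral_mono_on zero_le_one hint hRint hbound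
  have hRval : ∫ t in (0:ℝ)..1, (⟪h, f' x⟫ + α * N h ^ 2 * t) =
      ⟪h, f' x⟫ + α / 2 * N h ^ 2 := by
    rw [intervalIntegral.integral_add (intervalIntegrable_const)
      (intervalIntegral.intervalIntegrable_id.const_mul _),
      intervalIntegral.integral_const, intervalIntegral.integral_const_mul,
      integral_id]
    simp
    ring
  rw [hFTC, hRval] at hmono
  linarith

lemma imp21 {V : Set (EuclideanSpace ℝ (Fin n))}
    {α : ℝ} {N : EuclideanSpace ℝ (Fin n) → ℝ} (hN : IsNorm N)
    {f' : EuclideanSpace ℝ (Fin n) → EuclideanSpace ℝ (Fin n)}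
    (hp2 : ∀ x h, x ∈ V → x + h ∈ V → dualNorm N (f' (x + h) - f' x) ≤ α * N h) :
    ∀ x h, x ∈ V → x + h ∈ V → ⟪h, f' (x + h) - f' x⟫ ≤ α * N h ^ 2 := by
  intro x h hx hxh
  calc ⟪h, f' (x + h) - f' x⟫ ≤ N h * dualNorm N (f' (x + h) - f' x) :=
        inner_le_dualNorm hN _ h
    _ ≤ N h * (α * N h) := mul_le_mul_of_nonneg_left (hp2 x h hx hxh) (hN.1 h)
    _ = α * N h ^ 2 := by ring

end Aux

/-- equivalence of the three smoothness characterizations for a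
`C¹` convex function on a nonempty open convex set. -/
theorem stmt_0 {n : ℕ} (N : EuclideanSpace ℝ (Fin n) → ℝ) (hN : IsNorm N)
    (V : Set (EuclideanSpace ℝ (Fin n))) (hVne : V.Nonempty) (hVo : IsOpen V)
    (hVc : Convex ℝ V) (α : ℝ) (hα : 0 ≤ α)
    (f : EuclideanSpace ℝ (Fin n) → ℝ)
    (f' : EuclideanSpace ℝ (Fin n) → EuclideanSpace ℝ (Fin n))
    (hf : ∀ x ∈ V, HasGradientAt f (f' x) x) (hf'c : ContinuousOn f' V)
    (hconv : ConvexOn ℝ V f) :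
    List.TFAE
      [∀ x h, x ∈ V → x + h ∈ V → ⟪h, f' (x + h) - f' x⟫ ≤ α * N h ^ 2,
       ∀ x h, x ∈ V → x + h ∈ V → dualNorm N (f' (x + h) - f' x) ≤ α * N h,
       ∀ x h, x ∈ V → x + h ∈ V →
         f (x + h) ≤ f x + ⟪h, f' x⟫ + α / 2 * N h ^ 2] := by
  tfae_have 1 → 3 := fun hp1 => imp13 hVc hα hN hf hf'c hp1
  tfae_have 3 → 2 := fun hp3 => imp32 hVo hVc hα hN hf hconv hp3
  tfae_have 2 → 1 := fun hp2 => imp21 hN hp2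
  tfae_finish
end

section
/- Let G ⊆ ℝⁿ be an open convex domain, g : G → ℝ a continuously differentiable convex function, ‖·‖ a norm on ℝⁿ, and γ > 0. Assume that for every x ∈ G there exists r_x > 0 such that the ball V_x = {u : ‖u−x‖ < r_x} is contained in G and g(v) ≤ g(u) + ⟨g'(u), v−u⟩ + (γ/2)‖u−v‖² for all u, v ∈ V_x. Then ‖g'(y) − g'(z)‖_* ≤ γ‖y−z‖ for all y, z ∈ G. -/
open scoped RealInnerProductSpace
open Real Matrix

set_option maxHeartbeats 2000000 in
/-- if a `C¹` convex function on an open convex domain satisfies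
the local descent-lemma inequality on small `‖·‖`-balls around each point, then
its gradient is globally `γ`-Lipschitz on `G` w.r.t. `(‖·‖, ‖·‖_*)`. -/
theorem stmt_6 {n : ℕ} (G : Set (EuclideanSpace ℝ (Fin n)))
    (hGo : IsOpen G) (hGc : Convex ℝ G)
    (g : EuclideanSpace ℝ (Fin n) → ℝ)
    (g' : EuclideanSpace ℝ (Fin n) → EuclideanSpace ℝ (Fin n))
    (hg : ∀ x ∈ G, HasGradientAt g (g' x) x) (hg'c : ContinuousOn g' G)
    (hconv : ConvexOn ℝ G g)
    (N : EuclideanSpace ℝ (Fin n) → ℝ) (hN : IsNorm N)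
    (γ : ℝ) (hγ : 0 < γ)
    (hball : ∀ x ∈ G, ∃ r > (0 : ℝ), {u | N (u - x) < r} ⊆ G ∧
      ∀ u ∈ {u | N (u - x) < r}, ∀ v ∈ {u | N (u - x) < r},
        g v ≤ g u + ⟪g' u, v - u⟫ + γ / 2 * N (u - v) ^ 2) :
    ∀ y ∈ G, ∀ z ∈ G, dualNorm N (g' y - g' z) ≤ γ * N (y - z) := by
  obtain ⟨hN0, hNeq, hNsmul, hNadd⟩ := hN
  have hNneg : ∀ w, N (-w) = N w := by
    intro w; have := hNsmul (-1) w; simpa using this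
  have grad_ineq : ∀ a ∈ G, ∀ b ∈ G, g b + ⟪g' b, a - b⟫ ≤ g a := by
    intro a ha b hb
    rcases eq_or_ne a b with rfl | hab
    · simp
    set φ : ℝ → ℝ := fun t => g (b + t • (a - b)) with hφ
    have hmem : ∀ t ∈ Set.Icc (0:ℝ) 1, b + t • (a - b) ∈ G := fun t ht =>
      hGc.add_smul_sub_mem hb ha ht
    have hφconv : ConvexOn ℝ (Set.Icc (0:ℝ) 1) φ := by
      have h1 : ConvexOn ℝ ((AffineMap.lineMap b a : ℝ →ᵃ[ℝ] _) ⁻¹' G)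
          (g ∘ (AffineMap.lineMap b a : ℝ →ᵃ[ℝ] _)) := hconv.comp_affineMap _
      have h2 := h1.subset (fun t ht => by
        simpa [AffineMap.lineMap_apply, add_comm, sub_eq_iff_eq_add] using hmem t ht)
        (convex_Icc 0 1)
      convert h2 using 1
      funext t
      simp only [hφ, AffineMap.lineMap_apply, Function.comp_apply, vsub_eq_sub, vadd_eq_add]
      rw [add_comm]
    have hL : HasDerivAt (fun t : ℝ => b + t • (a - b)) (a - b) 0 := by
      simpa using ((hasDerivAt_id (0:ℝ)).smul_const (a - b)).const_add b
    have hφd : HasDerivAt φ ⟪g' b, a - b⟫ 0 := by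
      have hb' : b + (0:ℝ) • (a - b) = b := by simp
      have hF := (hg _ (hmem 0 (Set.left_mem_Icc.mpr zero_le_one))).hasFDerivAt
      have := hF.comp_hasDerivAt 0 hL
      simpa [hb', InnerProductSpace.toDual_apply_apply, Function.comp_def] using this
    have hs := hφconv.le_slope_of_hasDerivAt (Set.left_mem_Icc.mpr zero_le_one)
      (Set.right_mem_Icc.mpr zero_le_one) one_pos hφd
    have hslope : slope φ 0 1 = φ 1 - φ 0 := by simp [slope_def_field]
    have h0 : φ 0 = g b := by simp [hφ]
    have h1' : φ 1 = g a := by simp [hφ]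
    rw [hslope, h0, h1'] at hs
    linarith
  have locB : ∀ x ∈ G, ∃ δ > (0:ℝ), ∀ u v, N (u - x) < δ → N (v - x) < δ →
      ∀ s, ⟪g' u - g' v, s⟫ ≤ γ * (N (u - v) * N s) := by
    intro x hx
    obtain ⟨r, hr, hsub, hdesc⟩ := hball x hx
    refine ⟨r / 3, by linarith, ?_⟩
    intro u v hu hv s
    by_cases hs : N s = 0
    · have hs0 : s = 0 := (hNeq s).mp hs
      have hz : N (0 : EuclideanSpace ℝ (Fin n)) = 0 := (hNeq 0).mpr rfl
      simp [hs0, inner_zero_right, hz]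
    have hspos : 0 < N s := lt_of_le_of_ne (hN0 s) (Ne.symm hs)
    by_cases huv : u = v
    · subst huv
      have hz : N (0 : EuclideanSpace ℝ (Fin n)) = 0 := (hNeq 0).mpr rfl
      simp [inner_sub_left, hz]
    have hNuv : 0 < N (u - v) :=
      lt_of_le_of_ne (hN0 _) fun h => huv (sub_eq_zero.mp ((hNeq _).mp h.symm))
    set τ := N (u - v) / N s with hτdef
    have hτpos : 0 < τ := div_pos hNuv hspos
    have hτNs : τ * N s = N (u - v) := div_mul_cancel₀ _ hs
    have huB : u ∈ {u | N (u - x) < r} := by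
      simp only [Set.mem_setOf_eq]; linarith [hu]
    have hvB : v ∈ {u | N (u - x) < r} := by
      simp only [Set.mem_setOf_eq]; linarith [hv]
    have hxv : N (x - v) = N (v - x) := by rw [← neg_sub v x, hNneg]
    have hNuv3 : N (u - v) < 2 * (r / 3) := by
      have h3 : u - v = (u - x) + (x - v) := by abel
      calc N (u - v) ≤ N (u - x) + N (x - v) := h3 ▸ hNadd _ _
        _ < 2 * (r / 3) := by rw [hxv]; linarith [hu, hv]

    have hwB : v + τ • s ∈ {u | N (u - x) < r} := by
      simp only [Set.mem_setOf_eq]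
      have h3 : v + τ • s - x = (v - x) + τ • s := by abel
      have h4 : N (τ • s) = τ * N s := by rw [hNsmul, abs_of_pos hτpos]
      calc N (v + τ • s - x) ≤ N (v - x) + N (τ • s) := h3 ▸ hNadd _ _
        _ = N (v - x) + N (u - v) := by rw [h4, hτNs]
        _ < r := by linarith [hv, hNuv3]
    have h1 := hdesc v hvB (v + τ • s) hwB
    have h2 := hdesc u huB v hvB
    have h3 := grad_ineq (v + τ • s) (hsub hwB) u (hsub huB)
    -- simplify h1
    have e1 : v + τ • s - v = τ • s := by abel
    have e2 : N (v - (v + τ • s)) = τ * N s := by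
      have : v - (v + τ • s) = -(τ • s) := by abel
      rw [this, hNneg, hNsmul, abs_of_pos hτpos]
    have e3 : ⟪g' v, τ • s⟫ = τ * ⟪g' v, s⟫ := real_inner_smul_right _ _ _
    rw [e1, e2, e3, hτNs] at h1
    -- simplify h3
    have e4 : ⟪g' u, v + τ • s - u⟫ = ⟪g' u, v - u⟫ + τ * ⟪g' u, s⟫ := by
      have : v + τ • s - u = (v - u) + τ • s := by abel
      rw [this, inner_add_right, real_inner_smul_right]
    rw [e4] at h3
    have key : τ * (⟪g' u, s⟫ - ⟪g' v, s⟫) ≤ γ * N (u - v) ^ 2 := by nlinarith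
    have heq : γ * (N (u - v) * N s) * τ = γ * N (u - v) ^ 2 := by
      rw [hτdef]; field_simp
    rw [inner_sub_left]
    have hfin : (⟪g' u, s⟫ - ⟪g' v, s⟫) * τ ≤ γ * (N (u - v) * N s) * τ := by
      rw [heq]; linarith
    exact le_of_mul_le_mul_right hfin hτpos
  intro y hy z hz
  apply Real.sSup_le
  · rintro r ⟨s, hsle, rfl⟩
    by_cases hyz : y = z
    · have hz0 : N ((0 : EuclideanSpace ℝ (Fin n))) = 0 := (hNeq 0).mpr rfl
      simp [hyz, inner_sub_left, hz0]
    set w := z - y with hwdef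
    have hw0 : w ≠ 0 := sub_ne_zero.mpr (Ne.symm hyz)
    have hNw : 0 < N w := lt_of_le_of_ne (hN0 _) fun h => hw0 ((hNeq w).mp h.symm)
    set Lc := γ * N w with hLc
    have hℓG : ∀ t ∈ Set.Icc (0:ℝ) 1, y + t • w ∈ G := fun t ht =>
      hGc.add_smul_sub_mem hy hz ht
    set f : ℝ → ℝ := fun t => ⟪g' (y + t • w), s⟫ with hf
    have hfct : ∀ t : ℝ, y + t • w ∈ G → ContinuousAt f t := by
      intro t ht
      have h1 : Continuous fun t : ℝ => y + t • w := by
        exact continuous_const.add (continuous_id.smul continuous_const)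
      have h2 : ContinuousAt g' (y + t • w) := hg'c.continuousAt (hGo.mem_nhds ht)
      have h3 : Continuous fun u : EuclideanSpace ℝ (Fin n) => ⟪u, s⟫ :=
        continuous_id.inner continuous_const
      have h4 : ContinuousAt (fun t : ℝ => g' (y + t • w)) t :=
        h2.tendsto.comp h1.continuousAt
      have h5 : ContinuousAt ((fun u : EuclideanSpace ℝ (Fin n) => ⟪u, s⟫) ∘
          (fun t : ℝ => g' (y + t • w))) t := ContinuousAt.comp h3.continuousAt h4
      exact h5
    set S := {t : ℝ | t ∈ Set.Icc (0:ℝ) 1 ∧ f 0 - f t ≤ Lc * t} with hS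
    have h0S : (0:ℝ) ∈ S := ⟨Set.left_mem_Icc.mpr zero_le_one, by simp⟩
    have hbdd : BddAbove S := ⟨1, fun t ht => ht.1.2⟩
    set c := sSup S with hc
    have hc0 : 0 ≤ c := le_csSup hbdd h0S
    have hc1 : c ≤ 1 := csSup_le ⟨0, h0S⟩ fun t ht => ht.1.2
    have hcG : y + c • w ∈ G := hℓG c ⟨hc0, hc1⟩
    have hcS : c ∈ S := by
      refine ⟨⟨hc0, hc1⟩, ?_⟩
      have hfc' := hfct c hcG
      have hcl : c ∈ closure S := csSup_mem_closure ⟨0, h0S⟩ hbdd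
      obtain ⟨u, huS, hu⟩ := mem_closure_iff_seq_limit.mp hcl
      have htend : Filter.Tendsto (fun i => f 0 - f (u i) - Lc * u i) Filter.atTop
          (nhds (f 0 - f c - Lc * c)) :=
        (tendsto_const_nhds.sub (hfc'.tendsto.comp hu)).sub (hu.const_mul Lc)
      have hle : f 0 - f c - Lc * c ≤ 0 :=
        le_of_tendsto htend (Filter.Eventually.of_forall fun i => by
          have := (huS i).2; linarith)
      linarith
    have hc_eq : c = 1 := by
      by_contra hne
      have hclt : c < 1 := lt_of_le_of_ne hc1 hne
      obtain ⟨δ, hδ, hloc⟩ := locB (y + c • w) hcG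
      set ε := min (1 - c) (δ / (2 * N w)) with hε
      have hεpos : 0 < ε := lt_min (by linarith) (div_pos hδ (by positivity))
      set t := c + ε with ht
      have htIcc : t ∈ Set.Icc (0:ℝ) 1 := by
        constructor
        · linarith
        · have := min_le_left (1 - c) (δ / (2 * N w)); simp only [ht]; linarith
      have hdiff : (y + t • w) - (y + c • w) = ε • w := by
        rw [ht]; rw [add_smul]; abel
      have hNd : N ((y + t • w) - (y + c • w)) = ε * N w := by
        rw [hdiff, hNsmul, abs_of_pos hεpos]
      have hNd2 : N ((y + c • w) - (y + t • w)) = ε * N w := by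
        rw [← hNneg, neg_sub, hNd]
      have hεδ : ε * N w < δ := by
        have h5 : ε ≤ δ / (2 * N w) := min_le_right _ _
        have : ε * N w ≤ δ / 2 := by
          calc ε * N w ≤ (δ / (2 * N w)) * N w := by nlinarith
            _ = δ / 2 := by field_simp
        linarith
      have hz0 : N ((0 : EuclideanSpace ℝ (Fin n))) = 0 := (hNeq 0).mpr rfl
      have hloc2 := hloc (y + c • w) (y + t • w) (by simpa [hz0] using hδ)
        (by rw [hNd]; exact hεδ) s
      rw [hNd2] at hloc2
      have hfct' : f c - f t ≤ Lc * ε := by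
        rw [hf, ← inner_sub_left]
        calc ⟪g' (y + c • w) - g' (y + t • w), s⟫ ≤ γ * (ε * N w * N s) := hloc2
          _ ≤ γ * (ε * N w) := by
              have h6 : ε * N w * N s ≤ ε * N w := by nlinarith [hN0 s, hsle, mul_pos hεpos hNw]
              exact mul_le_mul_of_nonneg_left h6 hγ.le
          _ = Lc * ε := by rw [hLc]; ring
      have htS : t ∈ S := by
        refine ⟨htIcc, ?_⟩
        have := hcS.2
        have : f 0 - f t ≤ Lc * c + Lc * ε := by linarith [hcS.2, hfct']
        calc f 0 - f t ≤ Lc * c + Lc * ε := this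
          _ = Lc * t := by rw [ht]; ring
      have : t ≤ c := le_csSup hbdd htS
      linarith
    have h1S : (1:ℝ) ∈ S := hc_eq ▸ hcS
    have hfin := h1S.2
    have hf0 : f 0 = ⟪g' y, s⟫ := by simp [hf]
    have hf1 : f 1 = ⟪g' z, s⟫ := by
      have : y + (1:ℝ) • w = z := by rw [one_smul, hwdef]; abel
      rw [hf]; simp only; rw [this]
    have hNyz : N (y - z) = N w := by rw [← hNneg, neg_sub, hwdef]
    rw [hf0, hf1] at hfin
    rw [inner_sub_left, hNyz]
    calc ⟪g' y, s⟫ - ⟪g' z, s⟫ ≤ Lc * 1 := hfin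
      _ = γ * N w := by rw [hLc]; ring
  · exact mul_nonneg hγ.le (hN0 _)
end

section
/- Let g be a continuously differentiable convex function on ℝⁿ, ‖·‖ a norm on ℝⁿ, γ > 0, and let ℝⁿ_o denote the set of vectors with all coordinates nonzero. Assume for every x ∈ ℝⁿ_o there is r_x > 0 such that the ‖·‖-ball V_x of radius r_x centered at x is contained in ℝⁿ_o and g(v) ≤ g(u) + ⟨g'(u), v−u⟩ + (γ/2)‖u−v‖² for all u, v ∈ V_x. Then ‖g'(x) − g'(y)‖_* ≤ γ‖x−y‖ for all x, y ∈ ℝⁿ. -/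
open scoped RealInnerProductSpace
open Real Matrix

section Aux

/-- Local-to-global: a continuous function locally nonincreasing on an open interval
is nonincreasing across it. -/
lemma locGlob₀ (f : ℝ → ℝ) (hf : Continuous f) (a b : ℝ) (hab : a ≤ b)
    (H : ∀ t ∈ Set.Ioo a b, ∃ δ > (0:ℝ), ∀ u v : ℝ, t - δ < u → u ≤ v → v < t + δ → f v ≤ f u) :
    f b ≤ f a := by
  rcases eq_or_lt_of_le hab with rfl | hab
  · exact le_refl _
  have key : ∀ a' ∈ Set.Ioo a b, f b ≤ f a' := by
    intro a' ha'
    set S := Set.Icc a' b ∩ f ⁻¹' Set.Iic (f a') with hS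
    have hSclosed : IsClosed S := isClosed_Icc.inter (isClosed_Iic.preimage hf)
    have hSne : S.Nonempty := ⟨a', ⟨le_refl _, ha'.2.le⟩, show f a' ≤ f a' from le_refl _⟩
    have hSbdd : BddAbove S := ⟨b, fun t ht => ht.1.2⟩
    set m := sSup S with hm
    have hmS : m ∈ S := hSclosed.csSup_mem hSne hSbdd
    have hmb : m ≤ b := hmS.1.2
    rcases eq_or_lt_of_le hmb with h | h
    · exact h ▸ hmS.2
    · exfalso
      obtain ⟨δ, hδ, hloc⟩ := H m ⟨lt_of_lt_of_le ha'.1 hmS.1.1, h⟩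
      set v := min (m + δ/2) b with hv
      have hmv : m < v := lt_min (by linarith) h
      have h1 : f v ≤ f m := hloc m v (by linarith) hmv.le
        (lt_of_le_of_lt (min_le_left _ _) (by linarith))
      have hvS : v ∈ S := ⟨⟨le_trans hmS.1.1 hmv.le, min_le_right _ _⟩, le_trans h1 hmS.2⟩
      exact absurd (le_csSup hSbdd hvS) (not_le.2 hmv)
  refine ge_of_tendsto ((hf.tendsto a).mono_left (nhdsWithin_le_nhds (s := Set.Ioi a))) ?_
  filter_upwards [Ioo_mem_nhdsGT_of_mem (Set.mem_Ico.2 ⟨le_refl a, hab⟩)] with a' ha'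
  exact key a' ha'

/-- Local-to-global allowing a finite exceptional set. -/
lemma locGlob (f : ℝ → ℝ) (hf : Continuous f) (F : Finset ℝ) :
    ∀ a b : ℝ, a ≤ b →
    (∀ t ∈ Set.Ioo a b, t ∉ F →
      ∃ δ > (0:ℝ), ∀ u v : ℝ, t - δ < u → u ≤ v → v < t + δ → f v ≤ f u) →
    f b ≤ f a := by
  induction F using Finset.strongInduction with
  | _ F ih =>
    intro a b hab H
    by_cases hex : ∃ t ∈ F, t ∈ Set.Ioo a b
    · obtain ⟨t, htF, ht⟩ := hex
      have h1 : f b ≤ f t :=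
        ih (F.erase t) (Finset.erase_ssubset htF) t b ht.2.le (fun s hs hsF =>
          H s ⟨lt_trans ht.1 hs.1, hs.2⟩ (fun hsF' =>
            hsF (Finset.mem_erase.2 ⟨ne_of_gt hs.1, hsF'⟩)))
      have h2 : f t ≤ f a :=
        ih (F.erase t) (Finset.erase_ssubset htF) a t ht.1.le (fun s hs hsF =>
          H s ⟨hs.1, lt_trans hs.2 ht.2⟩ (fun hsF' =>
            hsF (Finset.mem_erase.2 ⟨ne_of_lt hs.2, hsF'⟩)))
      exact h1.trans h2
    · exact locGlob₀ f hf a b hab (fun t ht => H t ht (fun htF => hex ⟨t, htF, ht⟩))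

variable {n : ℕ}
local notation "E" => EuclideanSpace ℝ (Fin n)

/-- Gradient inequality for convex functions. -/
lemma convex_lower {g : E → ℝ} {g' : E → E}
    (hg : ∀ x, HasGradientAt g (g' x) x) (hconv : ConvexOn ℝ Set.univ g) (v w : E) :
    g v + ⟪g' v, w - v⟫ ≤ g w := by
  set d := w - v with hd
  have hline : HasDerivAt (fun t : ℝ => v + t • d) d 0 := by
    simpa using ((hasDerivAt_id (0:ℝ)).smul_const d).const_add v
  have hcomp : HasDerivAt (fun t : ℝ => g (v + t • d)) ⟪g' v, d⟫ 0 := by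
    have h1 := (hg v).hasFDerivAt
    have h2 : HasFDerivAt g ((InnerProductSpace.toDual ℝ _) (g' v) : E →L[ℝ] ℝ)
        ((fun t : ℝ => v + t • d) 0) := by simpa using h1
    have h3 := h2.comp_hasDerivAt 0 hline
    simp [InnerProductSpace.toDual_apply_apply] at h3
    exact h3
  have hslope : ∀ t ∈ Set.Ioc (0:ℝ) 1, slope (fun t : ℝ => g (v + t • d)) 0 t ≤ g w - g v := by
    intro t ht
    have hco := hconv.2 (Set.mem_univ v) (Set.mem_univ w)
      (show (0:ℝ) ≤ 1 - t by linarith [ht.2]) ht.1.le (show (1 - t) + t = 1 by ring)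
    have hpt : v + t • d = (1 - t) • v + t • w := by rw [hd]; module
    rw [slope_def_field, sub_zero, div_le_iff₀ ht.1]
    have h0 : v + (0:ℝ) • d = v := by simp
    rw [h0, hpt]
    simp only [smul_eq_mul] at hco
    nlinarith [hco]
  have htend : Filter.Tendsto (slope (fun t : ℝ => g (v + t • d)) 0) (nhdsWithin 0 (Set.Ioi 0))
      (nhds ⟪g' v, d⟫) :=
    (hasDerivAt_iff_tendsto_slope.1 hcomp).mono_left
      (nhdsWithin_mono 0 (fun x hx => ne_of_gt hx))
  have hle : ⟪g' v, d⟫ ≤ g w - g v := by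
    refine le_of_tendsto htend ?_
    filter_upwards [Ioc_mem_nhdsGT_of_mem (Set.mem_Ico.2 ⟨le_refl (0:ℝ), one_pos⟩)] with t ht
    exact hslope t ht
  linarith

lemma norm_neg' {N : E → ℝ} (hN : IsNorm N) (v : E) : N (-v) = N v := by
  have := hN.2.2.1 (-1) v
  simpa using this

/-- Local dual-norm Lipschitz estimate for the gradient in the quarter-ball. -/
lemma local_dual {g : E → ℝ} {g' : E → E}
    (hg : ∀ x, HasGradientAt g (g' x) x) (hconv : ConvexOn ℝ Set.univ g)
    {N : E → ℝ} (hN : IsNorm N) {γ : ℝ} (hγ : 0 < γ) {x₀ : E} {r : ℝ}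
    (hdesc : ∀ u ∈ {u : E | N (u - x₀) < r}, ∀ v ∈ {u : E | N (u - x₀) < r},
      g v ≤ g u + ⟪g' u, v - u⟫ + γ / 2 * N (u - v) ^ 2)
    {A B z : E} (hA : N (A - x₀) < r/4) (hB : N (B - x₀) < r/4) (hz : N z ≤ 1) :
    ⟪g' B - g' A, z⟫ ≤ γ * N (B - A) := by
  obtain ⟨Nneg, Nzero, Nsmul, Ntri⟩ := hN
  have hz0 : 0 ≤ N z := Nneg z
  set s := N (B - A) with hs
  have hs0 : 0 ≤ s := Nneg _
  rcases eq_or_lt_of_le hs0 with h0 | hspos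
  · have : B - A = 0 := (Nzero _).1 h0.symm
    have hBA : B = A := sub_eq_zero.1 this
    rw [hBA]
    simp [mul_nonneg hγ.le hs0]
  · have hsr : s < r/2 := by
      have h1 : N (B - A) ≤ N (B - x₀) + N (x₀ - A) := by
        have := Ntri (B - x₀) (x₀ - A); simpa using this
      have h2 : N (x₀ - A) = N (A - x₀) := by
        rw [← norm_neg' ⟨Nneg, Nzero, Nsmul, Ntri⟩ (A - x₀)]; congr 1; abel
      rw [← hs] at h1; linarith
    set w := B - s • z with hw
    have hmemA : A ∈ {u : E | N (u - x₀) < r} := by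
      simp only [Set.mem_setOf_eq]; linarith
    have hmemB : B ∈ {u : E | N (u - x₀) < r} := by
      simp only [Set.mem_setOf_eq]; linarith
    have hmemw : w ∈ {u : E | N (u - x₀) < r} := by
      simp only [Set.mem_setOf_eq]
      have h1 : N (w - x₀) ≤ N (B - x₀) + N (-(s • z)) := by
        have := Ntri (B - x₀) (-(s • z))
        have he : w - x₀ = (B - x₀) + (-(s • z)) := by rw [hw]; abel
        rw [he]; exact this
      have h2 : N (-(s • z)) = s * N z := by
        rw [norm_neg' ⟨Nneg, Nzero, Nsmul, Ntri⟩, Nsmul, abs_of_pos hspos]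
      nlinarith
    have hi : g w ≤ g B - s * ⟪g' B, z⟫ + γ / 2 * (s * N z) ^ 2 := by
      have := hdesc B hmemB w hmemw
      have e1 : w - B = -(s • z) := by rw [hw]; abel
      have e2 : B - w = s • z := by rw [hw]; abel
      have e3 : N (s • z) = s * N z := by rw [Nsmul, abs_of_pos hspos]
      rw [e1, e2, e3] at this
      have e4 : ⟪g' B, -(s • z)⟫ = -(s * ⟪g' B, z⟫) := by
        rw [inner_neg_right, real_inner_smul_right]
      rw [e4] at this; linarith
    have hii : g A + ⟪g' A, B - A⟫ - s * ⟪g' A, z⟫ ≤ g w := by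
      have hcl := convex_lower hg hconv A w
      have e1 : ⟪g' A, w - A⟫ = ⟪g' A, B - A⟫ - s * ⟪g' A, z⟫ := by
        have he : w - A = (B - A) - s • z := by rw [hw]; abel
        rw [he, inner_sub_right, real_inner_smul_right]
      linarith [e1 ▸ hcl]
    have hiii : g B ≤ g A + ⟪g' A, B - A⟫ + γ / 2 * s ^ 2 := by
      have := hdesc A hmemA B hmemB
      have e : N (A - B) = s := by
        rw [← norm_neg' ⟨Nneg, Nzero, Nsmul, Ntri⟩ (A - B)]
        have h : -(A - B) = B - A := by abel
        rw [h]
      rw [e] at this; exact this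
    have hkey : s * (⟪g' B, z⟫ - ⟪g' A, z⟫) ≤ γ * s ^ 2 := by
      have hNz2 : (N z) ^ 2 ≤ 1 := by nlinarith
      nlinarith [hi, hii, hiii,
        mul_nonneg (by positivity : (0:ℝ) ≤ γ/2 * s^2) (by linarith : (0:ℝ) ≤ 1 - N z ^ 2)]
    rw [inner_sub_left]
    have := (mul_le_mul_iff_right₀ hspos).1
      (by linarith [hkey] : s * (⟪g' B, z⟫ - ⟪g' A, z⟫) ≤ s * (γ * s))
    linarith [this]

/-- The per-direction global estimate along a generic segment. -/
lemma key_seg {g : E → ℝ} {g' : E → E}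
    (hg : ∀ x, HasGradientAt g (g' x) x) (hg'c : Continuous g')
    (hconv : ConvexOn ℝ Set.univ g)
    {N : E → ℝ} (hN : IsNorm N) {γ : ℝ} (hγ : 0 < γ)
    (hball : ∀ x : E, (∀ i, x i ≠ 0) →
      ∃ r > (0 : ℝ),
        {u : E | N (u - x) < r} ⊆ {u | ∀ i, u i ≠ 0} ∧
        ∀ u ∈ {u : E | N (u - x) < r},
          ∀ v ∈ {u : E | N (u - x) < r},
            g v ≤ g u + ⟪g' u, v - u⟫ + γ / 2 * N (u - v) ^ 2)
    (x y : E) (hx : ∀ i, x i ≠ 0) (hy : ∀ i, y i ≠ 0)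
    (z : E) (hz : N z ≤ 1) : ⟪g' x - g' y, z⟫ ≤ γ * N (x - y) := by
  obtain ⟨Nneg, Nzero, Nsmul, Ntri⟩ := hN
  set h : E := x - y with hh
  set c : ℝ → E := fun t => y + t • h with hc
  set f : ℝ → ℝ := fun t => ⟪g' (c t), z⟫ - γ * N h * t with hfdef
  have hccont : Continuous c := continuous_const.add (continuous_id.smul continuous_const)
  have hf : Continuous f :=
    ((hg'c.comp hccont).inner continuous_const).sub
      ((continuous_const.mul continuous_id))
  have hc0 : c 0 = y := by simp [hc]
  have hc1 : c 1 = x := by simp [hc, hh]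
  set F : Finset ℝ := Finset.univ.image (fun i : Fin n => -(y i) / h i) with hF
  have main : f 1 ≤ f 0 := by
    refine locGlob f hf F 0 1 zero_le_one ?_
    intro t ht htF
    have hct : ∀ i, (c t) i ≠ 0 := by
      intro i hzero
      have hcti : (c t) i = y i + t * h i := by
        simp [hc, PiLp.add_apply, PiLp.smul_apply, smul_eq_mul]
      rw [hcti] at hzero
      have hhi : h i ≠ 0 := by
        intro hhz; rw [hhz] at hzero; exact hy i (by linarith)
      apply htF
      refine Finset.mem_image.2 ⟨i, Finset.mem_univ i, ?_⟩
      field_simp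
      linarith
    obtain ⟨r, hr, hsub, hdesc⟩ := hball (c t) hct
    have hNh0 : 0 ≤ N h := Nneg h
    set δ := r / (4 * (N h + 1)) with hδdef
    have hδ : 0 < δ := by
      apply div_pos hr; nlinarith
    refine ⟨δ, hδ, ?_⟩
    intro u v huu huv hvv
    have hmem : ∀ s : ℝ, |s - t| < δ → N (c s - c t) < r/4 := by
      intro s habs
      have he : c s - c t = (s - t) • h := by
        simp only [hc]; module
      rw [he, Nsmul]
      have h1 : |s - t| * N h ≤ |s - t| * (N h + 1) := by
        apply mul_le_mul_of_nonneg_left (by linarith) (abs_nonneg _)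
      have h2 : |s - t| * (N h + 1) < δ * (N h + 1) := by
        apply mul_lt_mul_of_pos_right habs; nlinarith
      have h3 : δ * (N h + 1) = r / 4 := by
        rw [hδdef]; field_simp
      linarith
    have hmu : N (c u - c t) < r/4 := hmem u (abs_lt.2 ⟨by linarith, by linarith⟩)
    have hmv : N (c v - c t) < r/4 := hmem v (abs_lt.2 ⟨by linarith, by linarith⟩)
    have hdual := local_dual hg hconv ⟨Nneg, Nzero, Nsmul, Ntri⟩ hγ hdesc hmu hmv hz
    have hNvu : N (c v - c u) = (v - u) * N h := by
      have he : c v - c u = (v - u) • h := by simp only [hc]; module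
      rw [he, Nsmul, abs_of_nonneg (by linarith)]
    rw [hNvu] at hdual
    rw [inner_sub_left] at hdual
    simp only [hfdef]
    nlinarith [hdual]
  rw [hfdef] at main
  simp only [hc0, hc1] at main
  rw [inner_sub_left]
  linarith [main]

end Aux

/-- if a `C¹` convex function on `ℝⁿ` satisfies the local
descent-lemma inequality on small `‖·‖`-balls around each point of
`ℝⁿ_o = {x : ∀ i, xᵢ ≠ 0}`, its gradient is globally `γ`-Lipschitz. -/
theorem stmt_7 {n : ℕ} (g : EuclideanSpace ℝ (Fin n) → ℝ)
    (g' : EuclideanSpace ℝ (Fin n) → EuclideanSpace ℝ (Fin n))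
    (hg : ∀ x, HasGradientAt g (g' x) x) (hg'c : Continuous g')
    (hconv : ConvexOn ℝ Set.univ g)
    (N : EuclideanSpace ℝ (Fin n) → ℝ) (hN : IsNorm N)
    (γ : ℝ) (hγ : 0 < γ)
    (hball : ∀ x : EuclideanSpace ℝ (Fin n), (∀ i, x i ≠ 0) →
      ∃ r > (0 : ℝ),
        {u : EuclideanSpace ℝ (Fin n) | N (u - x) < r} ⊆ {u | ∀ i, u i ≠ 0} ∧
        ∀ u ∈ {u : EuclideanSpace ℝ (Fin n) | N (u - x) < r},
          ∀ v ∈ {u : EuclideanSpace ℝ (Fin n) | N (u - x) < r},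
            g v ≤ g u + ⟪g' u, v - u⟫ + γ / 2 * N (u - v) ^ 2) :
    ∀ x y, dualNorm N (g' x - g' y) ≤ γ * N (x - y) := by
  intro x y
  refine Real.sSup_le ?_ (mul_nonneg hγ.le (hN.1 _))
  rintro r ⟨z, hz, rfl⟩
  -- perturbation argument
  set o : EuclideanSpace ℝ (Fin n) := WithLp.toLp 2 (fun _ => (1:ℝ)) with ho
  set s : Set ℝ := {ε : ℝ | 0 < ε ∧ ∀ i, x i + ε ≠ 0 ∧ y i + ε ≠ 0} with hsdef
  have hcl : (0:ℝ) ∈ closure s := by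
    rw [Metric.mem_closure_iff]
    intro δ hδ
    set bad : Finset ℝ :=
      (Finset.univ.image fun i : Fin n => -(x i)) ∪ (Finset.univ.image fun i : Fin n => -(y i))
      with hbad
    obtain ⟨ε, hε, hεbad⟩ := (Set.Ioo_infinite (by linarith : (0:ℝ) < δ)).exists_notMem_finset bad
    refine ⟨ε, ⟨hε.1, fun i => ⟨?_, ?_⟩⟩, ?_⟩
    · intro hcon
      apply hεbad
      rw [hbad]
      exact Finset.mem_union_left _ (Finset.mem_image.2 ⟨i, Finset.mem_univ i, by linarith⟩)
    · intro hcon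
      apply hεbad
      rw [hbad]
      exact Finset.mem_union_right _ (Finset.mem_image.2 ⟨i, Finset.mem_univ i, by linarith⟩)
    · rw [Real.dist_eq, abs_of_nonpos (by linarith [hε.1])]
      linarith [hε.2]
  haveI : (nhdsWithin (0:ℝ) s).NeBot := mem_closure_iff_nhdsWithin_neBot.1 hcl
  have htend : Filter.Tendsto (fun ε : ℝ => ⟪g' (x + ε • o) - g' (y + ε • o), z⟫)
      (nhdsWithin 0 s) (nhds ⟪g' x - g' y, z⟫) := by
    have hcont : Continuous (fun ε : ℝ => ⟪g' (x + ε • o) - g' (y + ε • o), z⟫) := by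
      apply Continuous.inner _ continuous_const
      exact (hg'c.comp (continuous_const.add (continuous_id.smul continuous_const))).sub
        (hg'c.comp (continuous_const.add (continuous_id.smul continuous_const)))
    have := (hcont.tendsto 0).mono_left (nhdsWithin_le_nhds (s := s))
    simpa using this
  refine le_of_tendsto htend ?_
  filter_upwards [self_mem_nhdsWithin] with ε hε
  obtain ⟨hε0, hεi⟩ := hε
  have hdiff : (x + ε • o) - (y + ε • o) = x - y := by abel
  have happ : ∀ (w : EuclideanSpace ℝ (Fin n)) (i : Fin n), (w + ε • o) i = w i + ε := by
    intro w i
    simp [ho, PiLp.add_apply, PiLp.smul_apply, smul_eq_mul]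
  have := key_seg hg hg'c hconv hN hγ hball (x + ε • o) (y + ε • o)
    (fun i => by rw [happ]; exact (hεi i).1)
    (fun i => by rw [happ]; exact (hεi i).2) z hz
  rw [hdiff] at this
  exact this
end

section
/- Let Ψ : ℝᵖ × ℝ^q → ℝ be a convex function, ‖·‖ a norm on ℝ^{p+q}, and define the factor-norm ‖h‖' = min_{d ∈ ℝ^q} ‖(h,d)‖ on ℝᵖ. Assume Ψ is C¹ with ‖∇Ψ(z) − ∇Ψ(z')‖_* ≤ L‖z−z'‖ for all z, z', and that for every u ∈ ℝᵖ the set Argmin_{y} Ψ(u,y) is nonempty. Then Ψ̄(u) = min_y Ψ(u,y) is convex and continuously differentiable on ℝᵖ with ∇Ψ̄ Lipschitz continuous with constant L with respect to ‖·‖' (i.e., with respect to the conjugate of ‖·‖' on the gradient side). -/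
open scoped RealInnerProductSpace
open Real Matrix

section aux

variable {E : Type*} [NormedAddCommGroup E] [NormedSpace ℝ E]

lemma IsNorm.convexOn {N : E → ℝ} (hN : IsNorm N) : ConvexOn ℝ Set.univ N := by
  refine ⟨convex_univ, fun x _ y _ a b ha hb hab => ?_⟩
  calc N (a • x + b • y) ≤ N (a • x) + N (b • y) := hN.2.2.2 _ _
    _ = a * N x + b * N y := by rw [hN.2.2.1, hN.2.2.1, abs_of_nonneg ha, abs_of_nonneg hb]

lemma IsNorm.continuous [FiniteDimensional ℝ E] {N : E → ℝ} (hN : IsNorm N) :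
    Continuous N := by
  rw [← continuousOn_univ]
  exact ConvexOn.continuousOn isOpen_univ hN.convexOn

lemma IsNorm.exists_bounds [FiniteDimensional ℝ E] {N : E → ℝ} (hN : IsNorm N) :
    ∃ c C : ℝ, 0 < c ∧ 0 < C ∧ ∀ x, c * ‖x‖ ≤ N x ∧ N x ≤ C * ‖x‖ := by
  rcases subsingleton_or_nontrivial E with hE | hE
  · refine ⟨1, 1, one_pos, one_pos, fun x => ?_⟩
    have hx : x = 0 := Subsingleton.elim x 0
    simp [hx, (hN.2.1 0).mpr rfl]
  · have hsc : IsCompact (Metric.sphere (0 : E) 1) := isCompact_sphere 0 1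
    have hsn : (Metric.sphere (0 : E) 1).Nonempty :=
      NormedSpace.sphere_nonempty.mpr zero_le_one
    obtain ⟨a, ha, hamin⟩ := hsc.exists_isMinOn hsn hN.continuous.continuousOn
    obtain ⟨b, hb, hbmax⟩ := hsc.exists_isMaxOn hsn hN.continuous.continuousOn
    have hane : a ≠ 0 := by
      intro h; rw [h] at ha; simp at ha
    have hca : 0 < N a := by
      rcases lt_or_eq_of_le (hN.1 a) with h | h
      · exact h
      · exact absurd ((hN.2.1 a).mp h.symm) hane
    refine ⟨N a, max (N b) 1, hca, lt_of_lt_of_le one_pos (le_max_right _ _), fun x => ?_⟩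
    rcases eq_or_ne x 0 with rfl | hx
    · simp [(hN.2.1 0).mpr rfl]
    · have hxn : 0 < ‖x‖ := norm_pos_iff.mpr hx
      set u := ‖x‖⁻¹ • x with hu
      have hus : u ∈ Metric.sphere (0 : E) 1 := by
        simp [hu, norm_smul, abs_of_pos (inv_pos.mpr hxn), inv_mul_cancel₀ (ne_of_gt hxn)]
      have hxu : N x = ‖x‖ * N u := by
        rw [hu, hN.2.2.1, abs_of_pos (inv_pos.mpr hxn)]
        field_simp
      constructor
      · rw [hxu, mul_comm (N a) ‖x‖]
        exact mul_le_mul_of_nonneg_left (hamin hus) (le_of_lt hxn)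
      · rw [hxu]
        calc ‖x‖ * N u ≤ ‖x‖ * N b := mul_le_mul_of_nonneg_left (hbmax hus) (le_of_lt hxn)
          _ ≤ max (N b) 1 * ‖x‖ := by
              rw [mul_comm]
              exact mul_le_mul_of_nonneg_right (le_max_left _ _) (le_of_lt hxn)

end aux

section dual

variable {E : Type*} [NormedAddCommGroup E] [InnerProductSpace ℝ E]
variable {M : E → ℝ} {c C : ℝ} {v x : E}

lemma dualSet_nonempty (hM0 : M 0 = 0) (v : E) :
    {r | ∃ x, M x ≤ 1 ∧ r = ⟪v, x⟫}.Nonempty :=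
  ⟨⟪v, (0 : E)⟫, ⟨0, by rw [hM0]; exact zero_le_one, rfl⟩⟩

lemma dualSet_bddAbove (hc : 0 < c) (hlow : ∀ x, c * ‖x‖ ≤ M x) (v : E) :
    BddAbove {r | ∃ x, M x ≤ 1 ∧ r = ⟪v, x⟫} := by
  refine ⟨‖v‖ * c⁻¹, fun r hr => ?_⟩
  obtain ⟨x, hx, rfl⟩ := hr
  have hxc : ‖x‖ ≤ c⁻¹ := by
    have h1 : c * ‖x‖ ≤ 1 := le_trans (hlow x) hx
    have h2 : ‖x‖ ≤ 1 / c := (le_div_iff₀ hc).mpr (by linarith)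
    simpa [one_div] using h2
  calc ⟪v, x⟫ ≤ ‖v‖ * ‖x‖ := real_inner_le_norm v x
    _ ≤ ‖v‖ * c⁻¹ := mul_le_mul_of_nonneg_left hxc (norm_nonneg v)

end dual

section dual2

variable {E : Type*} [NormedAddCommGroup E] [InnerProductSpace ℝ E]
variable {M : E → ℝ} {c C : ℝ} {v x : E}

lemma le_dualNorm (hc : 0 < c) (hlow : ∀ x, c * ‖x‖ ≤ M x) (hx : M x ≤ 1) :
    ⟪v, x⟫ ≤ dualNorm M v :=
  le_csSup (dualSet_bddAbove hc hlow v) ⟨x, hx, rfl⟩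

lemma dualNorm_nonneg (hM0 : M 0 = 0) (hc : 0 < c) (hlow : ∀ x, c * ‖x‖ ≤ M x) (v : E) :
    0 ≤ dualNorm M v := by
  have := le_dualNorm (v := v) (x := 0) hc hlow (by rw [hM0]; exact zero_le_one)
  simpa using this

lemma dualNorm_le_s8 (hM0 : M 0 = 0) {b : ℝ} (h : ∀ x, M x ≤ 1 → ⟪v, x⟫ ≤ b) :
    dualNorm M v ≤ b := by
  refine csSup_le (dualSet_nonempty hM0 v) ?_
  rintro r ⟨x, hx, rfl⟩
  exact h x hx

lemma exists_dualNorm_approx (hM0 : M 0 = 0) {ε : ℝ} (hε : 0 < ε) (v : E) :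
    ∃ x, M x ≤ 1 ∧ dualNorm M v - ε < ⟪v, x⟫ := by
  obtain ⟨r, hr, hlt⟩ := exists_lt_of_lt_csSup (dualSet_nonempty hM0 v)
    (show dualNorm M v - ε < dualNorm M v from sub_lt_self _ hε)
  obtain ⟨x, hx, rfl⟩ := hr
  exact ⟨x, hx, hlt⟩

lemma inner_le_dualNorm_mul (hM0 : M 0 = 0) (hc : 0 < c) (hlow : ∀ x, c * ‖x‖ ≤ M x)
    (hom : ∀ (k : ℝ) x, M (k • x) = |k| * M x) (v x : E) :
    ⟪v, x⟫ ≤ dualNorm M v * M x := by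
  rcases eq_or_ne x 0 with rfl | hx
  · simp [hM0]
  · have hxn : 0 < ‖x‖ := norm_pos_iff.mpr hx
    have hMx : 0 < M x := lt_of_lt_of_le (mul_pos hc hxn) (hlow x)
    have h1 : M ((M x)⁻¹ • x) = 1 := by
      rw [hom, abs_of_pos (inv_pos.mpr hMx), inv_mul_cancel₀ (ne_of_gt hMx)]
    have h2 := le_dualNorm (v := v) hc hlow (le_of_eq h1)
    rw [real_inner_smul_right] at h2
    calc ⟪v, x⟫ = ((M x)⁻¹ * ⟪v, x⟫) * M x := by field_simp
      _ ≤ dualNorm M v * M x := mul_le_mul_of_nonneg_right h2 (le_of_lt hMx)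

lemma norm_le_dualNorm (hM0 : M 0 = 0) (hc : 0 < c) (hC : 0 < C)
    (hlow : ∀ x, c * ‖x‖ ≤ M x) (hup : ∀ x, M x ≤ C * ‖x‖)
    (hom : ∀ (k : ℝ) x, M (k • x) = |k| * M x) (v : E) :
    ‖v‖ ≤ C * dualNorm M v := by
  rcases eq_or_ne v 0 with rfl | hv
  · simpa using mul_nonneg (le_of_lt hC) (dualNorm_nonneg hM0 hc hlow 0)
  · have hvn : 0 < ‖v‖ := norm_pos_iff.mpr hv
    have hMv : 0 < M v := lt_of_lt_of_le (mul_pos hc hvn) (hlow v)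
    have h1 : M ((M v)⁻¹ • v) = 1 := by
      rw [hom, abs_of_pos (inv_pos.mpr hMv), inv_mul_cancel₀ (ne_of_gt hMv)]
    have h2 := le_dualNorm (v := v) hc hlow (le_of_eq h1)
    rw [real_inner_smul_right, real_inner_self_eq_norm_sq] at h2
    have h3 : ‖v‖ ^ 2 ≤ M v * dualNorm M v := by
      calc ‖v‖ ^ 2 = M v * ((M v)⁻¹ * ‖v‖ ^ 2) := by field_simp
        _ ≤ M v * dualNorm M v := mul_le_mul_of_nonneg_left h2 (le_of_lt hMv)
    have h4 : M v ≤ C * ‖v‖ := hup v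
    nlinarith [dualNorm_nonneg hM0 hc hlow v]

lemma dualNorm_neg (hom : ∀ (k : ℝ) x, M (k • x) = |k| * M x) (v : E) :
    dualNorm M (-v) = dualNorm M v := by
  unfold dualNorm
  congr 1
  ext r
  constructor
  · rintro ⟨x, hx, rfl⟩
    refine ⟨-x, ?_, by simp⟩
    have : M (-x) = M x := by simpa using hom (-1) x
    rwa [this]
  · rintro ⟨x, hx, rfl⟩
    refine ⟨-x, ?_, by simp⟩
    have : M (-x) = M x := by simpa using hom (-1) x
    rwa [this]

end dual2

section grad

variable {E : Type*} [NormedAddCommGroup E] [InnerProductSpace ℝ E] [CompleteSpace E]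

lemma hasDerivAt_grad_line {f : E → ℝ} {g : E} (z d : E) (t₀ : ℝ)
    (hf : HasGradientAt f g (z + t₀ • d)) :
    HasDerivAt (fun t : ℝ => f (z + t • d)) ⟪g, d⟫ t₀ := by
  have hline : HasDerivAt (fun t : ℝ => z + t • d) d t₀ := by
    simpa using ((hasDerivAt_id t₀).smul_const d).const_add z
  have h2 := (hasGradientAt_iff_hasFDerivAt.mp hf).comp_hasDerivAt t₀ hline
  simpa [InnerProductSpace.toDual_apply_apply, Function.comp_def] using h2

lemma grad_support {f : E → ℝ} {f' : E → E} (hconv : ConvexOn ℝ Set.univ f)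
    (hf : ∀ z, HasGradientAt f (f' z) z) (z z' : E) :
    f z + ⟪f' z, z' - z⟫ ≤ f z' := by
  set d := z' - z with hd
  have hd0 : HasDerivAt (fun t : ℝ => f (z + t • d)) ⟪f' z, d⟫ 0 := by
    have := hasDerivAt_grad_line (f := f) (g := f' (z + (0:ℝ) • d)) z d 0 (by simpa using hf z)
    simpa using this
  have htend : Filter.Tendsto (slope (fun t : ℝ => f (z + t • d)) 0)
      (nhdsWithin 0 (Set.Ioi 0)) (nhds ⟪f' z, d⟫) := by
    refine (hasDerivAt_iff_tendsto_slope.mp hd0).mono_left (nhdsWithin_mono 0 ?_)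
    intro t ht
    exact ne_of_gt ht
  have hev : ∀ᶠ t in nhdsWithin 0 (Set.Ioi 0),
      slope (fun t : ℝ => f (z + t • d)) 0 t ≤ f z' - f z := by
    filter_upwards [Ioc_mem_nhdsGT_of_mem (Set.mem_Ico.mpr ⟨le_refl 0, one_pos⟩)] with t ht
    have ht0 : 0 < t := ht.1
    have hcomb : z + t • d = (1 - t) • z + t • z' := by
      rw [sub_smul, one_smul, smul_sub]; abel
    have hcv := hconv.2 (Set.mem_univ z) (Set.mem_univ z')
      (by linarith [ht.2] : 0 ≤ 1 - t) (le_of_lt ht0) (by ring)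
    rw [← hcomb] at hcv
    rw [slope_def_field]
    simp only [sub_zero, zero_smul, add_zero]
    rw [div_le_iff₀ ht0]
    calc f (z + t • d) - f z ≤ (1 - t) * f z + t * f z' - f z := by
          have := hcv; simp only [smul_eq_mul] at this; linarith
      _ = (f z' - f z) * t := by ring
  have hle := le_of_tendsto htend hev
  linarith

end grad

section descent

variable {E : Type*} [NormedAddCommGroup E] [InnerProductSpace ℝ E] [CompleteSpace E]
variable {f : E → ℝ} {f' : E → E} {Nn : E → ℝ} {L c : ℝ}

lemma descent_lemma (hf : ∀ z, HasGradientAt f (f' z) z) (hf'c : Continuous f')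
    (hc : 0 < c) (hN0 : Nn 0 = 0) (hlow : ∀ x, c * ‖x‖ ≤ Nn x)
    (hom : ∀ (k : ℝ) x, Nn (k • x) = |k| * Nn x)
    (hlip : ∀ z z', dualNorm Nn (f' z - f' z') ≤ L * Nn (z - z')) (z h : E) :
    f (z + h) ≤ f z + ⟪f' z, h⟫ + L / 2 * Nn h ^ 2 := by
  have hNh : 0 ≤ Nn h := le_trans (by positivity) (hlow h)
  have key : ∀ t₀ : ℝ, HasDerivAt (fun t : ℝ => f (z + t • h)) ⟪f' (z + t₀ • h), h⟫ t₀ :=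
    fun t₀ => hasDerivAt_grad_line z h t₀ (hf _)
  have hcont : Continuous fun t : ℝ => ⟪f' (z + t • h), h⟫ :=
    Continuous.inner (hf'c.comp (continuous_const.add (continuous_id.smul continuous_const)))
      continuous_const
  have ftc : ∫ t in (0:ℝ)..1, ⟪f' (z + t • h), h⟫ = f (z + h) - f z := by
    have := intervalIntegral.integral_eq_sub_of_hasDerivAt (a := (0:ℝ)) (b := 1)
      (fun t _ => key t) (hcont.intervalIntegrable 0 1)
    simpa using this
  have hbound : ∀ t ∈ Set.Icc (0:ℝ) 1,
      ⟪f' (z + t • h), h⟫ ≤ ⟪f' z, h⟫ + (L * Nn h ^ 2) * t := by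
    intro t ht
    have h1 : ⟪f' (z + t • h) - f' z, h⟫ ≤ dualNorm Nn (f' (z + t • h) - f' z) * Nn h :=
      inner_le_dualNorm_mul hN0 hc hlow hom _ _
    have h2 : dualNorm Nn (f' (z + t • h) - f' z) ≤ L * Nn (t • h) := by
      have := hlip (z + t • h) z
      simpa using this
    have h3 : Nn (t • h) = t * Nn h := by rw [hom, abs_of_nonneg ht.1]
    have h4 : ⟪f' (z + t • h) - f' z, h⟫ = ⟪f' (z + t • h), h⟫ - ⟪f' z, h⟫ := by
      rw [inner_sub_left]
    rw [h3] at h2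
    nlinarith [mul_le_mul_of_nonneg_right h2 hNh]
  have hint : ∫ t in (0:ℝ)..1, ⟪f' (z + t • h), h⟫ ≤
      ∫ t in (0:ℝ)..1, (⟪f' z, h⟫ + (L * Nn h ^ 2) * t) := by
    refine intervalIntegral.integral_mono_on zero_le_one (hcont.intervalIntegrable 0 1) ?_ hbound
    exact (continuous_const.add (continuous_const.mul continuous_id')).intervalIntegrable 0 1
  have hval : ∫ t in (0:ℝ)..1, (⟪f' z, h⟫ + (L * Nn h ^ 2) * t) =
      ⟪f' z, h⟫ + L / 2 * Nn h ^ 2 := by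
    rw [intervalIntegral.integral_add (f := fun _ => ⟪f' z, h⟫) (g := fun t => L * Nn h ^ 2 * t)
      (intervalIntegrable_const)
      ((continuous_const.mul continuous_id').intervalIntegrable 0 1),
      intervalIntegral.integral_const_mul, integral_id]
    simp; ring
  rw [ftc] at hint
  rw [hval] at hint
  linarith

lemma lower_quad (hconv : ConvexOn ℝ Set.univ f)
    (hf : ∀ z, HasGradientAt f (f' z) z) (hf'c : Continuous f')
    (hc : 0 < c) (hN0 : Nn 0 = 0) (hlow : ∀ x, c * ‖x‖ ≤ Nn x)
    (hom : ∀ (k : ℝ) x, Nn (k • x) = |k| * Nn x)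
    (hlip : ∀ z z', dualNorm Nn (f' z - f' z') ≤ L * Nn (z - z'))
    (hLpos : 0 < L) (z z' : E) :
    f z + ⟪f' z, z' - z⟫ + 1 / (2 * L) * dualNorm Nn (f' z' - f' z) ^ 2 ≤ f z' := by
  set s := dualNorm Nn (f' z' - f' z) with hs
  have hs0 : 0 ≤ s := dualNorm_nonneg hN0 hc hlow _
  have hφmin : ∀ w, f z - ⟪f' z, z⟫ ≤ f w - ⟪f' z, w⟫ := by
    intro w
    have := grad_support hconv hf z w
    rw [inner_sub_right] at this
    linarith
  have key : ∀ ε : ℝ, 0 < ε →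
      f z + ⟪f' z, z' - z⟫ + 1 / (2 * L) * s ^ 2 ≤ f z' + ε := by
    intro ε hε
    set ε' := ε * L / (s + 1) with hε'
    have hε'pos : 0 < ε' := by positivity
    obtain ⟨x, hx1, hx2⟩ := exists_dualNorm_approx hN0 hε'pos (f' z' - f' z)
    set t := s / L with ht
    have ht0 : 0 ≤ t := by positivity
    set hh := -(t • x) with hhh
    have h1 : f z - ⟪f' z, z⟫ ≤ f (z' + hh) - ⟪f' z, z' + hh⟫ := hφmin _
    have h2 : f (z' + hh) ≤ f z' + ⟪f' z', hh⟫ + L / 2 * Nn hh ^ 2 :=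
      descent_lemma hf hf'c hc hN0 hlow hom hlip z' hh
    have h3 : Nn hh ≤ t := by
      have : Nn hh = t * Nn x := by
        rw [hhh, ← neg_smul, hom, abs_neg, abs_of_nonneg ht0]
      rw [this]
      calc t * Nn x ≤ t * 1 := mul_le_mul_of_nonneg_left hx1 ht0
        _ = t := mul_one t
    have hNhh0 : 0 ≤ Nn hh := le_trans (by positivity) (hlow hh)
    have h4 : Nn hh ^ 2 ≤ t ^ 2 := by nlinarith
    have h5 : ⟪f' z' - f' z, hh⟫ ≤ -(t * (s - ε')) := by
      rw [hhh, inner_neg_right, real_inner_smul_right]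
      have : s - ε' ≤ ⟪f' z' - f' z, x⟫ := le_of_lt hx2
      nlinarith
    have h6 : ⟪f' z', hh⟫ - ⟪f' z, hh⟫ = ⟪f' z' - f' z, hh⟫ := by rw [inner_sub_left]
    have h7 : ⟪f' z, z' + hh⟫ = ⟪f' z, z'⟫ + ⟪f' z, hh⟫ := by rw [inner_add_right]
    have h8 : ⟪f' z, z' - z⟫ = ⟪f' z, z'⟫ - ⟪f' z, z⟫ := by rw [inner_sub_right]
    -- combine: f z - ⟪f' z, z⟫ ≤ f z' - ⟪f' z, z'⟫ + ⟪f' z' - f' z, hh⟫ + L/2 * Nn hh^2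
    have hcomb : f z - ⟪f' z, z⟫ ≤ f z' - ⟪f' z, z'⟫ - t * (s - ε') + L / 2 * t ^ 2 := by
      nlinarith [hLpos]
    have htsub : t * (s - ε') = s ^ 2 / L - t * ε' := by
      rw [ht]; field_simp
    have hts : L / 2 * t ^ 2 = s ^ 2 / (2 * L) := by
      rw [ht]; field_simp
    have htε : t * ε' ≤ ε := by
      rw [ht, hε']
      rw [div_mul_div_comm]
      rw [div_le_iff₀ (by positivity)]
      calc s * (ε * L) = ε * L * s := by ring
        _ ≤ ε * L * (s + 1) := by nlinarith
        _ = ε * (L * (s + 1)) := by ring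
    rw [htsub, hts] at hcomb
    have h10 : 1 / (2 * L) * s ^ 2 = s ^ 2 / (2 * L) := by ring
    have h9 : s ^ 2 / L = 2 * (s ^ 2 / (2 * L)) := by
      field_simp
    linarith
  exact le_of_forall_pos_le_add key

end descent

section coco

variable {E : Type*} [NormedAddCommGroup E] [InnerProductSpace ℝ E] [CompleteSpace E]
variable {f : E → ℝ} {f' : E → E} {Nn : E → ℝ} {L c : ℝ}

lemma cocoercivity (hconv : ConvexOn ℝ Set.univ f)
    (hf : ∀ z, HasGradientAt f (f' z) z) (hf'c : Continuous f')
    (hc : 0 < c) (hN0 : Nn 0 = 0) (hlow : ∀ x, c * ‖x‖ ≤ Nn x)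
    (hom : ∀ (k : ℝ) x, Nn (k • x) = |k| * Nn x)
    (hlip : ∀ z z', dualNorm Nn (f' z - f' z') ≤ L * Nn (z - z'))
    (hLpos : 0 < L) (z z' : E) :
    dualNorm Nn (f' z - f' z') ^ 2 ≤ L * ⟪f' z - f' z', z - z'⟫ := by
  set s := dualNorm Nn (f' z - f' z') with hs
  have hneg : dualNorm Nn (f' z' - f' z) = s := by
    rw [hs, ← dualNorm_neg hom (f' z - f' z'), neg_sub]
  have hB1 := lower_quad hconv hf hf'c hc hN0 hlow hom hlip hLpos z z'
  have hB2 := lower_quad hconv hf hf'c hc hN0 hlow hom hlip hLpos z' z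
  rw [hneg] at hB1
  have hB2' : f z' + ⟪f' z', z - z'⟫ + 1 / (2 * L) * s ^ 2 ≤ f z := hB2
  have hinner : ⟪f' z - f' z', z - z'⟫ = -⟪f' z, z' - z⟫ - ⟪f' z', z - z'⟫ := by
    rw [inner_sub_left]
    have e1 : ⟪f' z, z - z'⟫ = -⟪f' z, z' - z⟫ := by
      rw [show z - z' = -(z' - z) by abel, inner_neg_right]
    rw [e1]
  have hsum : 2 * (1 / (2 * L) * s ^ 2) ≤ ⟪f' z - f' z', z - z'⟫ := by
    rw [hinner]; linarith
  have hL2 : 2 * (1 / (2 * L) * s ^ 2) = s ^ 2 / L := by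
    field_simp
  rw [hL2] at hsum
  rw [div_le_iff₀ hLpos] at hsum
  linarith [hsum]

end coco

section prodgrad

variable {E F : Type*} [NormedAddCommGroup E] [InnerProductSpace ℝ E] [CompleteSpace E]
  [NormedAddCommGroup F] [InnerProductSpace ℝ F] [CompleteSpace F]

lemma hasGradientAt_comp_fst {f : WithLp 2 (E × F) → ℝ} {g : WithLp 2 (E × F)}
    {z : WithLp 2 (E × F)} (hf : HasGradientAt f g z) :
    HasGradientAt (fun x : E => f ((WithLp.equiv 2 (E × F)).symm (x, z.snd))) g.fst z.fst := by
  let ι : E →L[ℝ] WithLp 2 (E × F) :=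
    ((WithLp.prodContinuousLinearEquiv 2 ℝ E F).symm : (E × F) →L[ℝ] WithLp 2 (E × F)).comp
      (ContinuousLinearMap.inl ℝ E F)
  have hfun : (fun x : E => (WithLp.equiv 2 (E × F)).symm (x, z.snd)) =
      fun x : E => (WithLp.equiv 2 (E × F)).symm ((0 : E), z.snd) + ι x := by
    funext x
    apply (WithLp.equiv 2 (E × F)).injective
    change _ = WithLp.ofLp ((WithLp.equiv 2 (E × F)).symm ((0 : E), z.snd)) + WithLp.ofLp (ι x)
    apply Prod.ext
    · exact (zero_add x).symm
    · exact (add_zero z.snd).symm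
  have hι : HasFDerivAt (fun x : E => (WithLp.equiv 2 (E × F)).symm (x, z.snd)) ι z.fst := by
    rw [hfun]
    exact ι.hasFDerivAt.const_add _
  have hcomp := HasFDerivAt.comp (𝕜 := ℝ) z.fst (hasGradientAt_iff_hasFDerivAt.mp hf) hι
  rw [hasGradientAt_iff_hasFDerivAt]
  refine (HasFDerivAt.congr_fderiv hcomp ?_)
  symm
  refine ContinuousLinearMap.ext fun x => ?_
  show ⟪g.fst, x⟫ = (InnerProductSpace.toDual ℝ (WithLp 2 (E × F)) g) (ι x)
  rw [InnerProductSpace.toDual_apply_apply]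
  have hx : (ι x : WithLp 2 (E × F)) = (WithLp.equiv 2 (E × F)).symm (x, (0 : F)) := rfl
  rw [hx, WithLp.prod_inner_apply]
  have h1 : (WithLp.ofLp ((WithLp.equiv 2 (E × F)).symm (x, (0 : F)))).1 = x := rfl
  have h2 : (WithLp.ofLp ((WithLp.equiv 2 (E × F)).symm (x, (0 : F)))).2 = (0 : F) := rfl
  rw [h1, h2]
  simp

lemma hasGradientAt_comp_snd {f : WithLp 2 (E × F) → ℝ} {g : WithLp 2 (E × F)}
    {z : WithLp 2 (E × F)} (hf : HasGradientAt f g z) :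
    HasGradientAt (fun y : F => f ((WithLp.equiv 2 (E × F)).symm (z.fst, y))) g.snd z.snd := by
  let ι : F →L[ℝ] WithLp 2 (E × F) :=
    ((WithLp.prodContinuousLinearEquiv 2 ℝ E F).symm : (E × F) →L[ℝ] WithLp 2 (E × F)).comp
      (ContinuousLinearMap.inr ℝ E F)
  have hfun : (fun y : F => (WithLp.equiv 2 (E × F)).symm (z.fst, y)) =
      fun y : F => (WithLp.equiv 2 (E × F)).symm (z.fst, (0 : F)) + ι y := by
    funext y
    apply (WithLp.equiv 2 (E × F)).injective
    change _ = WithLp.ofLp ((WithLp.equiv 2 (E × F)).symm (z.fst, (0 : F))) + WithLp.ofLp (ι y)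
    apply Prod.ext
    · exact (add_zero z.fst).symm
    · exact (zero_add y).symm
  have hι : HasFDerivAt (fun y : F => (WithLp.equiv 2 (E × F)).symm (z.fst, y)) ι z.snd := by
    rw [hfun]
    exact ι.hasFDerivAt.const_add _
  have hcomp := HasFDerivAt.comp (𝕜 := ℝ) z.snd (hasGradientAt_iff_hasFDerivAt.mp hf) hι
  rw [hasGradientAt_iff_hasFDerivAt]
  refine (HasFDerivAt.congr_fderiv hcomp ?_)
  symm
  refine ContinuousLinearMap.ext fun y => ?_
  show ⟪g.snd, y⟫ = (InnerProductSpace.toDual ℝ (WithLp 2 (E × F)) g) (ι y)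
  rw [InnerProductSpace.toDual_apply_apply]
  have hy : (ι y : WithLp 2 (E × F)) = (WithLp.equiv 2 (E × F)).symm ((0 : E), y) := rfl
  rw [hy, WithLp.prod_inner_apply]
  have h1 : (WithLp.ofLp ((WithLp.equiv 2 (E × F)).symm ((0 : E), y))).1 = (0 : E) := rfl
  have h2 : (WithLp.ofLp ((WithLp.equiv 2 (E × F)).symm ((0 : E), y))).2 = y := rfl
  rw [h1, h2]
  simp

end prodgrad

set_option maxHeartbeats 2000000 in
/-- partial minimization of a convex `C¹` function with
`L`-Lipschitz gradient (w.r.t. a norm `N` on `ℝ^{p+q}`) yields a convex `C¹`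
function whose gradient is `L`-Lipschitz w.r.t. the factor-norm `N'`. -/
theorem stmt_8 {p q : ℕ}
    (N : WithLp 2 (EuclideanSpace ℝ (Fin p) × EuclideanSpace ℝ (Fin q)) → ℝ)
    (hN : IsNorm N) (L : ℝ) (hL : 0 ≤ L)
    (Ψ : WithLp 2 (EuclideanSpace ℝ (Fin p) × EuclideanSpace ℝ (Fin q)) → ℝ)
    (Ψ' : WithLp 2 (EuclideanSpace ℝ (Fin p) × EuclideanSpace ℝ (Fin q)) →
      WithLp 2 (EuclideanSpace ℝ (Fin p) × EuclideanSpace ℝ (Fin q)))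
    (hconv : ConvexOn ℝ Set.univ Ψ)
    (hΨ : ∀ z, HasGradientAt Ψ (Ψ' z) z) (hΨ'c : Continuous Ψ')
    (hlip : ∀ z z', dualNorm N (Ψ' z - Ψ' z') ≤ L * N (z - z'))
    (hmin : ∀ u : EuclideanSpace ℝ (Fin p), ∃ y, ∀ y',
      Ψ (WithLp.toLp 2 ((u, y) : EuclideanSpace ℝ (Fin p) × EuclideanSpace ℝ (Fin q))) ≤
        Ψ (WithLp.toLp 2 ((u, y') : EuclideanSpace ℝ (Fin p) × EuclideanSpace ℝ (Fin q))))
    (N' : EuclideanSpace ℝ (Fin p) → ℝ)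
    (hN' : ∀ h, N' h = sInf {r | ∃ d : EuclideanSpace ℝ (Fin q),
      r = N (WithLp.toLp 2 ((h, d) : EuclideanSpace ℝ (Fin p) × EuclideanSpace ℝ (Fin q)))})
    (Ψb : EuclideanSpace ℝ (Fin p) → ℝ)
    (hΨb : ∀ u, Ψb u = sInf {r | ∃ y : EuclideanSpace ℝ (Fin q),
      r = Ψ (WithLp.toLp 2 ((u, y) : EuclideanSpace ℝ (Fin p) × EuclideanSpace ℝ (Fin q)))}) :
    ConvexOn ℝ Set.univ Ψb ∧
      ∃ Ψb' : EuclideanSpace ℝ (Fin p) → EuclideanSpace ℝ (Fin p),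
        (∀ u, HasGradientAt Ψb (Ψb' u) u) ∧ Continuous Ψb' ∧
          ∀ u u', dualNorm N' (Ψb' u - Ψb' u') ≤ L * N' (u - u') := by
  classical
  set mk : EuclideanSpace ℝ (Fin p) → EuclideanSpace ℝ (Fin q) →
      WithLp 2 (EuclideanSpace ℝ (Fin p) × EuclideanSpace ℝ (Fin q)) :=
    fun a b => WithLp.toLp 2 (a, b) with hmk
  obtain ⟨cN, CN, hcN, hCN, hNb⟩ := hN.exists_bounds
  have hN0 : N 0 = 0 := (hN.2.1 0).mpr rfl
  have hNlow : ∀ z, cN * ‖z‖ ≤ N z := fun z => (hNb z).1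
  have hNup : ∀ z, N z ≤ CN * ‖z‖ := fun z => (hNb z).2
  have hNhom := hN.2.2.1
  choose ymin hymin using hmin
  -- Ψb is attained at ymin
  have hΨbe : ∀ u, Ψb u = Ψ (WithLp.toLp 2 (u, ymin u)) := by
    intro u
    rw [hΨb u]
    apply le_antisymm
    · exact csInf_le ⟨Ψ (WithLp.toLp 2 (u, ymin u)), by rintro r ⟨y, rfl⟩; exact hymin u y⟩ ⟨ymin u, rfl⟩
    · exact le_csInf ⟨_, ymin u, rfl⟩ (by rintro r ⟨y, rfl⟩; exact hymin u y)
  -- second component of the gradient vanishes at the partial minimizer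
  have hsnd0 : ∀ u, (WithLp.ofLp (Ψ' (WithLp.toLp 2 (u, ymin u)))).2 = 0 := by
    intro u
    have hloc : IsLocalMin (fun y => Ψ (WithLp.toLp 2 (u, y))) (ymin u) :=
      Filter.Eventually.of_forall (fun y => hymin u y)
    have hgy : HasGradientAt (fun y => Ψ (WithLp.toLp 2 (u, y))) ((Ψ' (WithLp.toLp 2 (u, ymin u))).snd) (ymin u) :=
      hasGradientAt_comp_snd (hΨ (WithLp.toLp 2 (u, ymin u)))
    have h0 := hloc.hasFDerivAt_eq_zero (hasGradientAt_iff_hasFDerivAt.mp hgy)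
    have h1 := congrArg (InnerProductSpace.toDual ℝ _).symm h0
    simpa using h1
  set g : EuclideanSpace ℝ (Fin p) → EuclideanSpace ℝ (Fin p) :=
    fun u => (WithLp.ofLp (Ψ' (WithLp.toLp 2 (u, ymin u)))).1 with hg
  -- convexity of Ψb
  have hconvb : ConvexOn ℝ Set.univ Ψb := by
    refine ⟨convex_univ, fun u _ u' _ a b ha hb hab => ?_⟩
    rw [hΨbe u, hΨbe u', hΨbe (a • u + b • u')]
    calc Ψ (WithLp.toLp 2 (a • u + b • u', ymin (a • u + b • u')))
        ≤ Ψ (WithLp.toLp 2 (a • u + b • u', a • ymin u + b • ymin u')) := hymin _ _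
      _ ≤ a • Ψ (WithLp.toLp 2 (u, ymin u)) + b • Ψ (WithLp.toLp 2 (u', ymin u')) := by
          have h2 := hconv.2 (Set.mem_univ
              ((WithLp.toLp 2 (u, ymin u)) : WithLp 2 (EuclideanSpace ℝ (Fin p) × EuclideanSpace ℝ (Fin q))))
            (Set.mem_univ ((WithLp.toLp 2 (u', ymin u')) :
              WithLp 2 (EuclideanSpace ℝ (Fin p) × EuclideanSpace ℝ (Fin q)))) ha hb hab
          exact h2
  -- differentiability of Ψb
  have hgrad : ∀ u, HasGradientAt Ψb (g u) u := by
    intro u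
    rw [hasGradientAt_iff_isLittleO]
    have hlb : ∀ u', 0 ≤ Ψb u' - Ψb u - ⟪g u, u' - u⟫ := by
      intro u'
      have h1 := grad_support hconv hΨ (WithLp.toLp 2 (u, ymin u)) (WithLp.toLp 2 (u', ymin u'))
      have h2 : ⟪Ψ' (WithLp.toLp 2 (u, ymin u)),
          ((WithLp.toLp 2 (u', ymin u')) : WithLp 2 (EuclideanSpace ℝ (Fin p) × EuclideanSpace ℝ (Fin q)))
            - (WithLp.toLp 2 (u, ymin u))⟫ = ⟪g u, u' - u⟫ := by
        rw [WithLp.prod_inner_apply, hsnd0 u]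
        simp only [inner_zero_left, add_zero]
        rfl
      rw [hΨbe u, hΨbe u']
      rw [h2] at h1
      linarith
    have hE : HasGradientAt (fun x => Ψ (WithLp.toLp 2 (x, ymin u))) (g u) u :=
      hasGradientAt_comp_fst (hΨ (WithLp.toLp 2 (u, ymin u)))
    have hEo := hasGradientAt_iff_isLittleO.mp hE
    refine (Asymptotics.isBigO_of_le (nhds u) fun u' => ?_).trans_isLittleO hEo
    rw [Real.norm_eq_abs, Real.norm_eq_abs, abs_of_nonneg (hlb u')]
    refine le_trans ?_ (le_abs_self _)
    have hup : Ψb u' ≤ Ψ (WithLp.toLp 2 (u', ymin u)) := by rw [hΨbe u']; exact hymin u' (ymin u)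
    have heq : Ψb u = Ψ (WithLp.toLp 2 (u, ymin u)) := hΨbe u
    linarith
  -- facts about N'
  have hN'le : ∀ (h : EuclideanSpace ℝ (Fin p)) d, N' h ≤ N (WithLp.toLp 2 (h, d)) := by
    intro h d
    rw [hN' h]
    exact csInf_le ⟨0, by rintro r ⟨y, rfl⟩; exact hN.1 _⟩ ⟨d, rfl⟩
  have hfst_le : ∀ (h : EuclideanSpace ℝ (Fin p)) (d : EuclideanSpace ℝ (Fin q)),
      ‖h‖ ≤ ‖mk h d‖ := by
    intro h d
    have h2 := WithLp.prod_norm_sq_eq_of_L2 (mk h d)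
    rw [show (mk h d).fst = h from rfl, show (mk h d).snd = d from rfl] at h2
    nlinarith [norm_nonneg (mk h d), norm_nonneg h, norm_nonneg d, sq_nonneg ‖d‖,
      sq_nonneg (‖mk h d‖ + ‖h‖)]
  have hN'lb : ∀ h, cN * ‖h‖ ≤ N' h := by
    intro h
    rw [hN' h]
    refine le_csInf ⟨_, ⟨0, rfl⟩⟩ ?_
    rintro r ⟨d, rfl⟩
    calc cN * ‖h‖ ≤ cN * ‖mk h d‖ := mul_le_mul_of_nonneg_left (hfst_le h d) (le_of_lt hcN)
      _ ≤ N (WithLp.toLp 2 (h, d)) := hNlow (mk h d)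
  have hN'nonneg : ∀ h, 0 ≤ N' h := fun h => le_trans (by positivity) (hN'lb h)
  have hfstnorm : ∀ h : EuclideanSpace ℝ (Fin p), ‖mk h 0‖ = ‖h‖ := by
    intro h
    exact WithLp.norm_toLp_fst 2 (EuclideanSpace ℝ (Fin p)) (EuclideanSpace ℝ (Fin q)) h
  have hN'ub : ∀ h, N' h ≤ CN * ‖h‖ := by
    intro h
    calc N' h ≤ N (WithLp.toLp 2 (h, 0)) := hN'le h 0
      _ ≤ CN * ‖mk h 0‖ := hNup (mk h 0)
      _ = CN * ‖h‖ := by rw [hfstnorm h]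
  have hN'0 : N' 0 = 0 := le_antisymm (by simpa using hN'ub 0) (hN'nonneg 0)
  have hN'approx : ∀ (h : EuclideanSpace ℝ (Fin p)) (ε : ℝ), 0 < ε →
      ∃ d, N (WithLp.toLp 2 (h, d)) < N' h + ε := by
    intro h ε hε
    have hne : {r | ∃ d : EuclideanSpace ℝ (Fin q), r = N (WithLp.toLp 2 (h, d))}.Nonempty := ⟨_, ⟨0, rfl⟩⟩
    have hlt : sInf {r | ∃ d : EuclideanSpace ℝ (Fin q), r = N (WithLp.toLp 2 (h, d))} < N' h + ε := by
      rw [← hN' h]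
      linarith
    obtain ⟨r, ⟨d, rfl⟩, hr⟩ := exists_lt_of_csInf_lt hne hlt
    exact ⟨d, hr⟩
  have hN'hom : ∀ (k : ℝ) h, N' (k • h) = |k| * N' h := by
    have hsmul : ∀ (k : ℝ) (h : EuclideanSpace ℝ (Fin p)) (d : EuclideanSpace ℝ (Fin q)),
        N (WithLp.toLp 2 (k • h, k • d)) = |k| * N (WithLp.toLp 2 (h, d)) := by
      intro k h d
      rw [show ((WithLp.toLp 2 (k • h, k • d)) : WithLp 2 (EuclideanSpace ℝ (Fin p) ×
        EuclideanSpace ℝ (Fin q))) = k • ((WithLp.toLp 2 (h, d)) : WithLp 2 (EuclideanSpace ℝ (Fin p) ×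
        EuclideanSpace ℝ (Fin q))) from rfl, hNhom]
    have step : ∀ (k : ℝ), k ≠ 0 → ∀ h, N' (k • h) ≤ |k| * N' h := by
      intro k hk h
      refine le_of_forall_pos_le_add (fun ε hε => ?_)
      have hkpos : 0 < |k| := abs_pos.mpr hk
      obtain ⟨d, hd⟩ := hN'approx h (ε / |k|) (by positivity)
      calc N' (k • h) ≤ N (WithLp.toLp 2 (k • h, k • d)) := hN'le _ _
        _ = |k| * N (WithLp.toLp 2 (h, d)) := hsmul k h d
        _ ≤ |k| * (N' h + ε / |k|) := mul_le_mul_of_nonneg_left (le_of_lt hd) (le_of_lt hkpos)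
        _ = |k| * N' h + ε := by
            field_simp
    intro k h
    rcases eq_or_ne k 0 with rfl | hk
    · simp [hN'0]
    · apply le_antisymm (step k hk h)
      have h2 := step k⁻¹ (inv_ne_zero hk) (k • h)
      rw [inv_smul_smul₀ hk, abs_inv] at h2
      have hkpos : 0 < |k| := abs_pos.mpr hk
      rw [← mul_le_mul_iff_right₀ hkpos] at h2
      calc |k| * N' h ≤ |k| * (|k|⁻¹ * N' (k • h)) := h2
        _ = N' (k • h) := by field_simp
  -- Lipschitz estimate for g
  have hlipb : ∀ u u', dualNorm N' (g u - g u') ≤ L * N' (u - u') := by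
    intro u u'
    set S := dualNorm N (Ψ' (WithLp.toLp 2 (u, ymin u)) - Ψ' (WithLp.toLp 2 (u', ymin u'))) with hS
    have hS0 : 0 ≤ S := dualNorm_nonneg hN0 hcN hNlow _
    have hvsnd : (WithLp.ofLp (Ψ' (WithLp.toLp 2 (u, ymin u)) - Ψ' (WithLp.toLp 2 (u', ymin u')))).2 = 0 := by
      rw [show (WithLp.ofLp (Ψ' (WithLp.toLp 2 (u, ymin u)) - Ψ' (WithLp.toLp 2 (u', ymin u')))).2
          = (WithLp.ofLp (Ψ' (WithLp.toLp 2 (u, ymin u)))).2 - (WithLp.ofLp (Ψ' (WithLp.toLp 2 (u', ymin u')))).2 from rfl, hsnd0 u, hsnd0 u']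
      simp
    have hpair : ∀ w : WithLp 2 (EuclideanSpace ℝ (Fin p) × EuclideanSpace ℝ (Fin q)),
        ⟪Ψ' (WithLp.toLp 2 (u, ymin u)) - Ψ' (WithLp.toLp 2 (u', ymin u')), w⟫ = ⟪g u - g u', (WithLp.ofLp w).1⟫ := by
      intro w
      rw [WithLp.prod_inner_apply, hvsnd]
      simp only [inner_zero_left, add_zero]
      rfl
    have step1 : dualNorm N' (g u - g u') ≤ S := by
      apply dualNorm_le_s8 hN'0
      intro x hx
      refine le_of_forall_pos_le_add (fun ε hε => ?_)
      obtain ⟨d, hd⟩ := hN'approx x (ε / (S + 1)) (by positivity)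
      have hx1 : ⟪g u - g u', x⟫ = ⟪Ψ' (WithLp.toLp 2 (u, ymin u)) - Ψ' (WithLp.toLp 2 (u', ymin u')), (WithLp.toLp 2 (x, d))⟫ :=
        (hpair (WithLp.toLp 2 (x, d))).symm
      have hx2 : ⟪Ψ' (WithLp.toLp 2 (u, ymin u)) - Ψ' (WithLp.toLp 2 (u', ymin u')), (WithLp.toLp 2 (x, d))⟫ ≤ S * N (WithLp.toLp 2 (x, d)) :=
        inner_le_dualNorm_mul hN0 hcN hNlow hNhom _ _
      have hx3 : N (WithLp.toLp 2 (x, d)) ≤ 1 + ε / (S + 1) := by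
        have := hd
        linarith [hx]
      have hx4 : S * N (WithLp.toLp 2 (x, d)) ≤ S * (1 + ε / (S + 1)) :=
        mul_le_mul_of_nonneg_left hx3 hS0
      have hx5 : S * (1 + ε / (S + 1)) ≤ S + ε := by
        have hS1 : (0:ℝ) < S + 1 := by linarith
        rw [mul_add, mul_one]
        have : S * (ε / (S + 1)) ≤ ε := by
          rw [mul_div_assoc']
          rw [div_le_iff₀ hS1]
          nlinarith
        linarith
      linarith [hx1, hx2]
    have step3 : ⟪g u - g u', u - u'⟫ ≤ S * N' (u - u') := by
      refine le_of_forall_pos_le_add (fun ε hε => ?_)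
      obtain ⟨d, hd⟩ := hN'approx (u - u') (ε / (S + 1)) (by positivity)
      have hx1 : ⟪g u - g u', u - u'⟫ = ⟪Ψ' (WithLp.toLp 2 (u, ymin u)) - Ψ' (WithLp.toLp 2 (u', ymin u')), (WithLp.toLp 2 (u - u', d))⟫ :=
        (hpair (WithLp.toLp 2 (u - u', d))).symm
      have hx2 : ⟪Ψ' (WithLp.toLp 2 (u, ymin u)) - Ψ' (WithLp.toLp 2 (u', ymin u')), (WithLp.toLp 2 (u - u', d))⟫ ≤ S * N (WithLp.toLp 2 (u - u', d)) :=
        inner_le_dualNorm_mul hN0 hcN hNlow hNhom _ _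
      have hx4 : S * N (WithLp.toLp 2 (u - u', d)) ≤ S * (N' (u - u') + ε / (S + 1)) :=
        mul_le_mul_of_nonneg_left (le_of_lt hd) hS0
      have hx5 : S * (N' (u - u') + ε / (S + 1)) ≤ S * N' (u - u') + ε := by
        have hS1 : (0:ℝ) < S + 1 := by linarith
        rw [mul_add]
        have : S * (ε / (S + 1)) ≤ ε := by
          rw [mul_div_assoc']
          rw [div_le_iff₀ hS1]
          nlinarith
        linarith
      linarith [hx1, hx2]
    rcases eq_or_lt_of_le hS0 with hSe | hSpos
    · refine le_trans step1 ?_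
      rw [← hSe]
      exact mul_nonneg hL (hN'nonneg _)
    · have hLpos : 0 < L := by
        by_contra hL0
        push_neg at hL0
        have := hlip (WithLp.toLp 2 (u, ymin u)) (WithLp.toLp 2 (u', ymin u'))
        have hnn : 0 ≤ N (((WithLp.toLp 2 (u, ymin u)) : WithLp 2 (EuclideanSpace ℝ (Fin p) ×
          EuclideanSpace ℝ (Fin q))) - (WithLp.toLp 2 (u', ymin u'))) := hN.1 _
        nlinarith [hSpos]
      have hc := cocoercivity hconv hΨ hΨ'c hcN hN0 hNlow hNhom hlip hLpos
        (WithLp.toLp 2 (u, ymin u)) (WithLp.toLp 2 (u', ymin u'))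
      have hinner : ⟪Ψ' (WithLp.toLp 2 (u, ymin u)) - Ψ' (WithLp.toLp 2 (u', ymin u')),
          ((WithLp.toLp 2 (u, ymin u)) : WithLp 2 (EuclideanSpace ℝ (Fin p) × EuclideanSpace ℝ (Fin q)))
            - (WithLp.toLp 2 (u', ymin u'))⟫ = ⟪g u - g u', u - u'⟫ := by
        rw [hpair]
        rfl
      rw [hinner] at hc
      have hfin : S ≤ L * N' (u - u') := by
        nlinarith [step3, hc, hSpos, hLpos, hN'nonneg (u - u')]
      exact le_trans step1 hfin
  -- continuity of g
  have hgcont : Continuous g := by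
    have hlips : ∀ u u', ‖g u - g u'‖ ≤ CN * L * CN * ‖u - u'‖ := by
      intro u u'
      calc ‖g u - g u'‖ ≤ CN * dualNorm N' (g u - g u') :=
            norm_le_dualNorm hN'0 hcN hCN hN'lb hN'ub hN'hom _
        _ ≤ CN * (L * N' (u - u')) :=
            mul_le_mul_of_nonneg_left (hlipb u u') (le_of_lt hCN)
        _ ≤ CN * (L * (CN * ‖u - u'‖)) := by
            have := hN'ub (u - u')
            have hLN : L * N' (u - u') ≤ L * (CN * ‖u - u'‖) :=
              mul_le_mul_of_nonneg_left this hL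
            exact mul_le_mul_of_nonneg_left hLN (le_of_lt hCN)
        _ = CN * L * CN * ‖u - u'‖ := by ring
    have hlw : LipschitzWith (Real.toNNReal (CN * L * CN)) g := by
      apply LipschitzWith.of_dist_le_mul
      intro u u'
      rw [dist_eq_norm, dist_eq_norm, Real.coe_toNNReal _ (by positivity)]
      exact hlips u u'
    exact hlw.continuous
  exact ⟨hconvb, g, hgrad, hgcont, hlipb⟩
end

section
/- Moreover, in the setting of the partial-minimization lemma: if u ∈ ℝᵖ and y ∈ Argmin_{y'} Ψ(u,y'), then ∇Ψ̄(u) = ∇_u Ψ(u,y), and this value does not depend on the choice of the minimizer y. -/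
open scoped RealInnerProductSpace
open Real Matrix

lemma convexOn_fderiv_le' {E : Type*} [NormedAddCommGroup E] [NormedSpace ℝ E]
    {f : E → ℝ} (hf : ConvexOn ℝ Set.univ f) {x : E} {f' : E →L[ℝ] ℝ}
    (hd : HasFDerivAt f f' x) (z : E) : f' (z - x) ≤ f z - f x := by
  set v := z - x with hv
  have h1 : HasDerivAt (fun t : ℝ => x + t • v) v 0 := by
    simpa using ((hasDerivAt_id (0 : ℝ)).smul_const v).const_add x
  have hline : HasDerivAt (fun t : ℝ => f (x + t • v)) (f' v) 0 :=
    (by simpa using hd : HasFDerivAt f f' (x + (0 : ℝ) • v)).comp_hasDerivAt 0 h1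
  have htend : Filter.Tendsto (slope (fun t : ℝ => f (x + t • v)) 0) (nhdsWithin 0 (Set.Ioi 0))
      (nhds (f' v)) := by
    refine (hasDerivAt_iff_tendsto_slope.mp hline).mono_left (nhdsWithin_mono _ ?_)
    intro t ht
    simp only [Set.mem_compl_iff, Set.mem_singleton_iff]
    exact (ne_of_gt ht)
  refine le_of_tendsto htend ?_
  filter_upwards [Ioo_mem_nhdsGT_of_mem (by norm_num : (0 : ℝ) ∈ Set.Ico 0 1)] with t ht
  have ht0 : 0 < t := ht.1
  have hconv := hf.2 (Set.mem_univ x) (Set.mem_univ z) (by linarith [ht.2] : (0:ℝ) ≤ 1 - t)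
    ht0.le (by ring)
  have hxz : x + t • v = (1 - t) • x + t • z := by rw [hv]; module
  rw [slope_def_field]
  rw [div_le_iff₀ (by simpa using ht0)]
  simp only [zero_smul, add_zero, sub_zero]
  rw [hxz]
  calc f ((1 - t) • x + t • z) - f x ≤ (1 - t) • f x + t • f z - f x := by linarith [hconv]
    _ = (f z - f x) * t := by simp [smul_eq_mul]; ring

lemma aux_main {E F : Type*} [NormedAddCommGroup E] [InnerProductSpace ℝ E]
    [NormedAddCommGroup F] [InnerProductSpace ℝ F] [CompleteSpace E] [CompleteSpace F]
    (Ψ : WithLp 2 (E × F) → ℝ) (Ψ' : WithLp 2 (E × F) → WithLp 2 (E × F))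
    (hconv : ConvexOn ℝ Set.univ Ψ)
    (hΨ : ∀ z, HasGradientAt Ψ (Ψ' z) z)
    (hmin : ∀ u : E, ∃ y : F, ∀ y', Ψ (WithLp.toLp 2 ((u, y) : E × F)) ≤ Ψ (WithLp.toLp 2 ((u, y') : E × F)))
    (Ψb : E → ℝ)
    (hΨb : ∀ u, Ψb u = sInf {r | ∃ y : F, r = Ψ (WithLp.toLp 2 ((u, y) : E × F))})
    (u : E) (y : F)
    (hy : ∀ y', Ψ (WithLp.toLp 2 ((u, y) : E × F)) ≤ Ψ (WithLp.toLp 2 ((u, y') : E × F)))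
    (gu : E)
    (hgu : HasGradientAt (fun u' => Ψ (WithLp.toLp 2 ((u', y) : E × F))) gu u) :
    HasGradientAt Ψb gu u := by
  classical
  let mk : E → F → WithLp 2 (E × F) := fun a b => WithLp.toLp 2 ((a, b) : E × F)
  have hmk1 : ∀ a b, (mk a b).fst = a := fun _ _ => rfl
  have hmk2 : ∀ a b, (mk a b).snd = b := fun _ _ => rfl
  let e : WithLp 2 (E × F) ≃L[ℝ] E × F := WithLp.prodContinuousLinearEquiv 2 ℝ E F
  let ι₁ : E →L[ℝ] WithLp 2 (E × F) :=
    (e.symm : (E × F) →L[ℝ] WithLp 2 (E × F)).comp (ContinuousLinearMap.inl ℝ E F)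
  let ι₂ : F →L[ℝ] WithLp 2 (E × F) :=
    (e.symm : (E × F) →L[ℝ] WithLp 2 (E × F)).comp (ContinuousLinearMap.inr ℝ E F)
  have hι₁ : ∀ h : E, ι₁ h = mk h 0 := fun h => rfl
  have hι₂ : ∀ k : F, ι₂ k = mk 0 k := fun k => rfl
  have hext : ∀ z w : WithLp 2 (E × F), z.fst = w.fst → z.snd = w.snd → z = w := by
    intro z w h1 h2
    exact WithLp.ofLp_injective 2 (Prod.ext h1 h2)
  set z₀ : WithLp 2 (E × F) := mk u y with hz₀
  set D : WithLp 2 (E × F) →L[ℝ] ℝ := InnerProductSpace.toDual ℝ _ (Ψ' z₀) with hD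
  have hDz : HasFDerivAt Ψ D z₀ := (hΨ z₀).hasFDerivAt
  -- partial derivative in u
  have hpart1 : HasFDerivAt (fun u' : E => Ψ (WithLp.toLp 2 ((u', y) : E × F))) (D.comp ι₁) u := by
    have h0 : HasFDerivAt (fun u' : E => Ψ (ι₁ u' + mk 0 y)) (D.comp ι₁) u := by
      have haff := (ι₁.hasFDerivAt (x := u)).add_const (mk 0 y)
      have : ι₁ u + mk 0 y = z₀ := by
        refine hext _ _ ?_ ?_ <;>
          simp [WithLp.add_fst, WithLp.add_snd, hι₁, hmk1, hmk2, hz₀]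
      exact (this ▸ hDz).comp u haff
    have hfun : (fun u' : E => Ψ (ι₁ u' + mk 0 y)) = fun u' : E => Ψ (WithLp.toLp 2 ((u', y) : E × F)) := by
      funext u'
      congr 1
      refine hext _ _ ?_ ?_ <;>
        simp [WithLp.add_fst, WithLp.add_snd, hι₁, hmk1, hmk2]
    rw [hfun] at h0
    exact h0
  -- partial derivative in y
  have hpart2 : HasFDerivAt (fun y' : F => Ψ (WithLp.toLp 2 ((u, y') : E × F))) (D.comp ι₂) y := by
    have h0 : HasFDerivAt (fun y' : F => Ψ (ι₂ y' + mk u 0)) (D.comp ι₂) y := by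
      have haff := (ι₂.hasFDerivAt (x := y)).add_const (mk u 0)
      have : ι₂ y + mk u 0 = z₀ := by
        refine hext _ _ ?_ ?_ <;>
          simp [WithLp.add_fst, WithLp.add_snd, hι₂, hmk1, hmk2, hz₀]
      exact (this ▸ hDz).comp y haff
    have hfun : (fun y' : F => Ψ (ι₂ y' + mk u 0)) = fun y' : F => Ψ (WithLp.toLp 2 ((u, y') : E × F)) := by
      funext y'
      congr 1
      refine hext _ _ ?_ ?_ <;>
        simp [WithLp.add_fst, WithLp.add_snd, hι₂, hmk1, hmk2]
    rw [hfun] at h0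
    exact h0
  have hloc : IsLocalMin (fun y' : F => Ψ (WithLp.toLp 2 ((u, y') : E × F))) y :=
    Filter.Eventually.of_forall (fun y' => hy y')
  have hD2 : D.comp ι₂ = 0 := hloc.hasFDerivAt_eq_zero hpart2
  -- gu identified
  have hgu' : HasFDerivAt (fun u' : E => Ψ (WithLp.toLp 2 ((u', y) : E × F)))
      (InnerProductSpace.toDual ℝ E gu) u := hgu.hasFDerivAt
  have hDgu : D.comp ι₁ = InnerProductSpace.toDual ℝ E gu := hpart1.unique hgu'
  -- key inner-product identity
  have hkey : ∀ (h : E) (k : F), D (mk h k) = ⟪gu, h⟫ := by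
    intro h k
    have hsplit : mk h k = ι₁ h + ι₂ k := by
      refine hext _ _ ?_ ?_ <;>
        simp [WithLp.add_fst, WithLp.add_snd, hι₁, hι₂, hmk1, hmk2]
    rw [hsplit, map_add]
    have h1 : D (ι₁ h) = ⟪gu, h⟫ := by
      have h1' : D.comp ι₁ h = InnerProductSpace.toDual ℝ E gu h := by rw [hDgu]
      simpa [InnerProductSpace.toDual_apply_apply] using h1'
    have h2 : D (ι₂ k) = 0 := by
      have h2' : D.comp ι₂ k = (0 : F →L[ℝ] ℝ) k := by rw [hD2]
      simpa using h2'
    rw [h1, h2, add_zero]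
  -- value of Ψb at minimizers
  have hΨbval : ∀ (u' : E) (y' : F),
      (∀ y'' : F, Ψ (WithLp.toLp 2 ((u', y') : E × F)) ≤ Ψ (WithLp.toLp 2 ((u', y'') : E × F))) →
      Ψb u' = Ψ (WithLp.toLp 2 ((u', y') : E × F)) := by
    intro u' y' hm
    rw [hΨb]
    refine le_antisymm (csInf_le ⟨Ψ (WithLp.toLp 2 ((u', y') : E × F)), ?_⟩ ⟨y', rfl⟩)
      (le_csInf ⟨_, y', rfl⟩ ?_) <;> · rintro r ⟨y'', rfl⟩; exact hm y''
  have hΨbu : Ψb u = Ψ (WithLp.toLp 2 ((u, y) : E × F)) := hΨbval u y hy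
  -- bounds
  have hub : ∀ u' : E, Ψb u' ≤ Ψ (WithLp.toLp 2 ((u', y) : E × F)) := by
    intro u'
    obtain ⟨yu, hyu⟩ := hmin u'
    rw [hΨbval u' yu hyu]
    exact hyu y
  have hlb : ∀ u' : E, Ψb u + ⟪gu, u' - u⟫ ≤ Ψb u' := by
    intro u'
    obtain ⟨yu, hyu⟩ := hmin u'
    have hc := convexOn_fderiv_le' hconv hDz (mk u' yu)
    have hsub : mk u' yu - z₀ = mk (u' - u) (yu - y) := by
      refine hext _ _ ?_ ?_ <;>
        simp [WithLp.sub_fst, WithLp.sub_snd, hmk1, hmk2, hz₀]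
    rw [hsub, hkey] at hc
    have hval : Ψ (mk u' yu) = Ψb u' := (hΨbval u' yu hyu).symm
    have hval0 : Ψ z₀ = Ψb u := hΨbu.symm
    rw [hval, hval0] at hc
    linarith [hc]
  -- conclude
  rw [hasGradientAt_iff_hasFDerivAt, hasFDerivAt_iff_isLittleO_nhds_zero]
  have hε : (fun h : E => Ψ (WithLp.toLp 2 ((u + h, y) : E × F)) - Ψ (WithLp.toLp 2 ((u, y) : E × F)) - ⟪gu, h⟫)
      =o[nhds 0] fun h : E => h := by
    have := hasFDerivAt_iff_isLittleO_nhds_zero.mp hgu'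
    simpa [InnerProductSpace.toDual_apply_apply] using this
  refine Asymptotics.IsBigO.trans_isLittleO (Asymptotics.isBigO_of_le _ ?_) hε
  intro h
  have h1 : Ψb (u + h) ≤ Ψ (WithLp.toLp 2 ((u + h, y) : E × F)) := hub (u + h)
  have h2 : Ψb u + ⟪gu, (u + h) - u⟫ ≤ Ψb (u + h) := hlb (u + h)
  have h3 : (u + h) - u = h := by abel
  rw [h3] at h2
  simp only [InnerProductSpace.toDual_apply_apply, Real.norm_eq_abs]
  exact abs_le_abs (by linarith) (by linarith)

/-- in the partial-minimization lemma, if `y` minimizes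
`Ψ(u,·)`, then `∇Ψ̄(u) = ∇ᵤΨ(u,y)` (so the value does not depend on the
choice of minimizer, by uniqueness of gradients). -/
theorem stmt_9 {p q : ℕ}
    (N : WithLp 2 (EuclideanSpace ℝ (Fin p) × EuclideanSpace ℝ (Fin q)) → ℝ)
    (hN : IsNorm N) (L : ℝ) (hL : 0 ≤ L)
    (Ψ : WithLp 2 (EuclideanSpace ℝ (Fin p) × EuclideanSpace ℝ (Fin q)) → ℝ)
    (Ψ' : WithLp 2 (EuclideanSpace ℝ (Fin p) × EuclideanSpace ℝ (Fin q)) →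
      WithLp 2 (EuclideanSpace ℝ (Fin p) × EuclideanSpace ℝ (Fin q)))
    (hconv : ConvexOn ℝ Set.univ Ψ)
    (hΨ : ∀ z, HasGradientAt Ψ (Ψ' z) z) (hΨ'c : Continuous Ψ')
    (hlip : ∀ z z', dualNorm N (Ψ' z - Ψ' z') ≤ L * N (z - z'))
    (hmin : ∀ u : EuclideanSpace ℝ (Fin p), ∃ y, ∀ y',
      Ψ (WithLp.toLp 2 ((u, y) : EuclideanSpace ℝ (Fin p) × EuclideanSpace ℝ (Fin q))) ≤
        Ψ (WithLp.toLp 2 ((u, y') : EuclideanSpace ℝ (Fin p) × EuclideanSpace ℝ (Fin q))))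
    (Ψb : EuclideanSpace ℝ (Fin p) → ℝ)
    (hΨb : ∀ u, Ψb u = sInf {r | ∃ y : EuclideanSpace ℝ (Fin q),
      r = Ψ (WithLp.toLp 2 ((u, y) : EuclideanSpace ℝ (Fin p) × EuclideanSpace ℝ (Fin q)))})
    (u : EuclideanSpace ℝ (Fin p)) (y : EuclideanSpace ℝ (Fin q))
    (hy : ∀ y', Ψ (WithLp.toLp 2 ((u, y) : EuclideanSpace ℝ (Fin p) × EuclideanSpace ℝ (Fin q))) ≤
      Ψ (WithLp.toLp 2 ((u, y') : EuclideanSpace ℝ (Fin p) × EuclideanSpace ℝ (Fin q))))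
    (gu : EuclideanSpace ℝ (Fin p))
    (hgu : HasGradientAt (fun u' =>
      Ψ (WithLp.toLp 2 ((u', y) : EuclideanSpace ℝ (Fin p) × EuclideanSpace ℝ (Fin q)))) gu u) :
    HasGradientAt Ψb gu u := by
  exact aux_main Ψ Ψ' hconv hΨ hmin Ψb hΨb u y hy gu hgu
end
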